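/- arXiv:2404.08577 — 6 statements merged into one kernel-verified Lean document; each statement's English description precedes it below -/
import Mathlib

section
/- Let H=(V,E) be a connected finite simple graph with a fixed total order on E. Then the family of edge sets F ⊆ E such that (V,F) is connected is the disjoint union, over spanning trees T ⊆ E of H, of the intervals {F : T ⊆ F ⊆ T ∪ E_T}; that is, every connected spanning edge set F contains exactly one spanning tree T with T ⊆ F ⊆ T ∪ E_T. -/
open MeasureTheory

attribute [local instance] Classical.propDecidable

namespace VolumePaper

variable {V : Type} [Fintype V]

/-- The set of endpoints of a finite set of (potential) edges. -/
noncomputable def verts (T : Finset (Sym2 V)) : Finset V :=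
  Finset.univ.filter (fun v => ∃ e ∈ T, v ∈ e)

/-- `T` forms a tree (necessarily with at least one edge): the graph on the set of
endpoints of `T` whose edges are the members of `T` is a tree. -/
def IsTreeSet (T : Finset (Sym2 V)) : Prop :=
  (SimpleGraph.induce (↑(verts T) : Set V)
    (SimpleGraph.fromEdgeSet (↑T : Set (Sym2 V)))).IsTree

/-- The broken edges of `T` relative to the induced subgraph `G[S]` and a fixed
total edge order (given by an injective function `ord` into `ℕ`): edges `e` of `G[S]`
not in `T` such that `e` is the largest edge of a (the) cycle of `T ∪ {e}`. -/
noncomputable def brokenEdgesOn (G : SimpleGraph V) (ord : Sym2 V → ℕ) (S : Finset V)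
    (T : Finset (Sym2 V)) : Finset (Sym2 V) :=
  Finset.univ.filter (fun e =>
    e ∈ G.edgeSet ∧ (∀ v ∈ e, v ∈ S) ∧ e ∉ T ∧
    ∃ (u : V) (c : (SimpleGraph.fromEdgeSet (insert e (↑T : Set (Sym2 V)))).Walk u u),
      c.IsCycle ∧ e ∈ c.edges ∧ ∀ e' ∈ c.edges, ord e' ≤ ord e)

/-- The broken edges of a tree `T`, relative to the graph induced by `G` on the
endpoints of `T`. -/
noncomputable def brokenEdges (G : SimpleGraph V) (ord : Sym2 V → ℕ)
    (T : Finset (Sym2 V)) : Finset (Sym2 V) :=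
  brokenEdgesOn G ord (verts T) T

/-- Indicator (as a real number) of the event `x_u + x_v > 1` on an unordered pair. -/
noncomputable def indGt (x : V → ℝ) : Sym2 V → ℝ :=
  Sym2.lift ⟨fun u v => if 1 < x u + x v then 1 else 0, by intro a b; dsimp only; rw [add_comm]⟩

/-- Indicator (as a real number) of the event `x_u + x_v ≤ 1` on an unordered pair. -/
noncomputable def indLe (x : V → ℝ) : Sym2 V → ℝ :=
  Sym2.lift ⟨fun u v => if x u + x v ≤ 1 then 1 else 0, by intro a b; dsimp only; rw [add_comm]⟩

/-- Extension of a function on a finite subset of coordinates by `0`. -/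
noncomputable def extFun (S : Finset V) (x : {v // v ∈ S} → ℝ) : V → ℝ :=
  fun v => if h : v ∈ S then x ⟨v, h⟩ else 0

/-- The integral `∫_{[0,1/2+δ]^S} ∏_{uv ∈ T} 1[x_u+x_v>1] ∏_{st ∈ E_T} 1[x_s+x_t ≤ 1] dμ`,
where `E_T` is the set of broken edges of `T` relative to `G[S]`. -/
noncomputable def treeIntegral (G : SimpleGraph V) (ord : Sym2 V → ℕ) (δ : ℝ)
    (S : Finset V) (T : Finset (Sym2 V)) : ℝ :=
  ∫ x : {v // v ∈ S} → ℝ in Set.univ.pi (fun _ => Set.Icc (0:ℝ) (1/2 + δ)),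
    (∏ e ∈ T, indGt (extFun S x) e) * ∏ e ∈ brokenEdgesOn G ord S T, indLe (extFun S x) e

/-- The weight `w_T` of a tree `T` of edges of `G`. -/
noncomputable def treeWeight (G : SimpleGraph V) (ord : Sym2 V → ℕ) (δ : ℝ)
    (T : Finset (Sym2 V)) : ℝ :=
  (1/2 + δ) ^ (-((verts T).card : ℤ)) * (-1 : ℝ) ^ T.card *
    treeIntegral G ord δ (verts T) T

/-- The connected components (each having at least one edge) of a set `F` of edges. -/
noncomputable def comps (F : Finset (Sym2 V)) : Finset (Finset (Sym2 V)) :=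
  F.image (fun e => F.filter (fun e' => ∃ u ∈ e, ∃ v ∈ e',
    (SimpleGraph.fromEdgeSet (↑F : Set (Sym2 V))).Reachable u v))

/-- `F` is a forest of edges of `G` all of whose endpoints lie in `S`. -/
def IsForestOn (G : SimpleGraph V) (S : Finset V) (F : Finset (Sym2 V)) : Prop :=
  (↑F : Set (Sym2 V)) ⊆ G.edgeSet ∧ (∀ e ∈ F, ∀ v ∈ e, v ∈ S) ∧
    (SimpleGraph.fromEdgeSet (↑F : Set (Sym2 V))).IsAcyclic

/-- The polynomial `p_{G[S],δ}(x) = ∑_{F forest of G[S]} (∏_{T comp. of F} w_T) x^{|F|}`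
(with weights computed in `G`). -/
noncomputable def pPolyOn (G : SimpleGraph V) (ord : Sym2 V → ℕ) (δ : ℝ) (S : Finset V) :
    Polynomial ℂ :=
  ∑ F ∈ Finset.univ.filter (fun F => IsForestOn G S F),
    Polynomial.monomial F.card (((∏ T ∈ comps F, treeWeight G ord δ T : ℝ)) : ℂ)

/-- The polynomial `p_{G,δ}`. -/
noncomputable def pPoly (G : SimpleGraph V) (ord : Sym2 V → ℕ) (δ : ℝ) : Polynomial ℂ :=
  pPolyOn G ord δ Finset.univ

/-- `T` is (the edge set of) a spanning tree of the induced subgraph `G[S]`. -/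
def IsSpanningTreeOn (G : SimpleGraph V) (S : Finset V) (T : Finset (Sym2 V)) : Prop :=
  (↑T : Set (Sym2 V)) ⊆ G.edgeSet ∧ (∀ e ∈ T, ∀ v ∈ e, v ∈ S) ∧
    (SimpleGraph.induce (↑S : Set V)
      (SimpleGraph.fromEdgeSet (↑T : Set (Sym2 V)))).IsTree

/-- The weight `w(G[S])` of the subgraph of `G` induced by `S`. -/
noncomputable def indWeight (G : SimpleGraph V) (ord : Sym2 V → ℕ) (δ : ℝ)
    (S : Finset V) : ℝ :=
  ∑ T ∈ Finset.univ.filter (fun T => IsSpanningTreeOn G S T),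
    (1/2 + δ) ^ (-(S.card : ℤ)) * (-1 : ℝ) ^ T.card * treeIntegral G ord δ S T

/-- `G` has maximum degree at most `Δ`. -/
def maxDegreeLE (G : SimpleGraph V) (Δ : ℝ) : Prop :=
  ∀ v : V, ((Finset.univ.filter (fun u => G.Adj v u)).card : ℝ) ≤ Δ

/-- The truncated relaxed independent set polytope `P_{G,δ}`. -/
def polytope (G : SimpleGraph V) (δ : ℝ) : Set (V → ℝ) :=
  {x | (∀ v, x v ∈ Set.Icc (0:ℝ) (1/2 + δ)) ∧ ∀ ⦃u v⦄, G.Adj u v → x u + x v ≤ 1}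


open SimpleGraph in
omit [Fintype V] in
private lemma reach_trans {G1 G2 : SimpleGraph V}
    (h : ∀ a b : V, G1.Adj a b → G2.Reachable a b) {x y : V} (r : G1.Reachable x y) :
    G2.Reachable x y := by
  obtain ⟨w⟩ := r
  induction w with
  | nil => exact Reachable.refl _
  | cons ha _ ih => exact (h _ _ ha).trans ih

open SimpleGraph in
omit [Fintype V] in
private lemma delete_connected {s : Set (Sym2 V)} {f : Sym2 V}
    (hT : (SimpleGraph.fromEdgeSet s).Connected) {u : V}
    (c : (SimpleGraph.fromEdgeSet s).Walk u u)
    (hc : c.IsCycle) (hf : f ∈ c.edges) :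
    (SimpleGraph.fromEdgeSet (s \ {f})).Connected := by
  have hnV : Nonempty V := hT.nonempty
  refine ⟨fun x y => ?_⟩
  refine reach_trans (fun a b hab => ?_) (hT.preconnected x y)
  rw [fromEdgeSet_adj] at hab
  by_cases hef : s(a, b) = f
  · have h2 := (adj_and_reachable_delete_edges_iff_exists_cycle
      (G := SimpleGraph.fromEdgeSet s)).mpr ⟨u, c, hc, hef ▸ hf⟩
    refine h2.2.mono ?_
    intro p q hpq
    rw [deleteEdges_adj, fromEdgeSet_adj] at hpq
    rw [fromEdgeSet_adj]
    refine ⟨⟨hpq.1.1, ?_⟩, hpq.1.2⟩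
    intro hh
    exact hpq.2 (by rw [Set.mem_singleton_iff]; rw [hh, hef])
  · exact SimpleGraph.Adj.reachable
      ((fromEdgeSet_adj _).mpr ⟨⟨hab.1, hef⟩, hab.2⟩)

open SimpleGraph in
/-- Let `H` be a connected finite simple graph with a fixed total edge
order. Every edge set `F ⊆ E(H)` spanning a connected graph on all of `V` contains
exactly one spanning tree `T` with `T ⊆ F ⊆ T ∪ E_T`. -/
theorem statement3 (V : Type) [Fintype V] (H : SimpleGraph V) (hconn : H.Connected)
    (ord : Sym2 V → ℕ) (hord : Function.Injective ord)
    (F : Finset (Sym2 V)) (hFE : (↑F : Set (Sym2 V)) ⊆ H.edgeSet)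
    (hFconn : (SimpleGraph.fromEdgeSet (↑F : Set (Sym2 V))).Connected) :
    ∃! T : Finset (Sym2 V),
      (↑T : Set (Sym2 V)) ⊆ H.edgeSet ∧
      (SimpleGraph.fromEdgeSet (↑T : Set (Sym2 V))).IsTree ∧
      T ⊆ F ∧ F ⊆ T ∪ brokenEdgesOn H ord Finset.univ T := by
  classical
  set S : Finset (Finset (Sym2 V)) := Finset.univ.filter
    (fun T : Finset (Sym2 V) =>
      T ⊆ F ∧ (SimpleGraph.fromEdgeSet (↑T : Set (Sym2 V))).Connected) with hS
  have hFS : F ∈ S := by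
    rw [hS, Finset.mem_filter]
    exact ⟨Finset.mem_univ _, subset_rfl, hFconn⟩
  obtain ⟨T, hTS, hTmin⟩ := Finset.exists_min_image S
    (fun T => ∑ x ∈ T, (ord x + 1)) ⟨F, hFS⟩
  rw [hS, Finset.mem_filter] at hTS
  obtain ⟨-, hTF, hTconn⟩ := hTS
  have hTE : (↑T : Set (Sym2 V)) ⊆ H.edgeSet := fun e he =>
    hFE (Finset.mem_coe.mpr (hTF (Finset.mem_coe.mp he)))
  -- acyclicity of the minimizer
  have hacyc : (SimpleGraph.fromEdgeSet (↑T : Set (Sym2 V))).IsAcyclic := by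
    intro u c hc
    have hlen : c.edges ≠ [] := by
      have h3 := hc.three_le_length
      intro h
      rw [← Walk.length_edges, h] at h3
      simp at h3
    obtain ⟨f, hf⟩ := List.exists_mem_of_ne_nil _ hlen
    have hfT : f ∈ T := by
      have h1 := c.edges_subset_edgeSet hf
      rw [edgeSet_fromEdgeSet] at h1
      exact h1.1
    have hconn2 := delete_connected hTconn c hc hf
    rw [← Finset.coe_erase] at hconn2
    have hmem : T.erase f ∈ S := by
      rw [hS, Finset.mem_filter]
      exact ⟨Finset.mem_univ _, (Finset.erase_subset f T).trans hTF, hconn2⟩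
    have hle := hTmin _ hmem
    have heq := Finset.add_sum_erase T (fun x => ord x + 1) hfT
    omega
  have hTree : (SimpleGraph.fromEdgeSet (↑T : Set (Sym2 V))).IsTree := ⟨hTconn, hacyc⟩
  -- every edge of F not in T is broken
  have hbroken : ∀ e, e ∈ F → e ∉ T → e ∈ brokenEdgesOn H ord Finset.univ T := by
    intro e
    induction e using Sym2.ind with
    | _ u v =>
    intro heF heT
    have heE : s(u, v) ∈ H.edgeSet := hFE (Finset.mem_coe.mpr heF)
    have huv : u ≠ v := (H.mem_edgeSet.mp heE).ne
    have hadj : (SimpleGraph.fromEdgeSet (insert s(u, v) (↑T : Set (Sym2 V)))).Adj u v :=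
      (fromEdgeSet_adj _).mpr ⟨Set.mem_insert _ _, huv⟩
    obtain ⟨w0⟩ := hTconn.preconnected v u
    set p : (SimpleGraph.fromEdgeSet (↑T : Set (Sym2 V))).Walk v u := w0.toPath.val with hp0
    have hp : p.IsPath := w0.toPath.2
    have hsub : ∀ g ∈ p.edges,
        g ∈ (SimpleGraph.fromEdgeSet (insert s(u, v) (↑T : Set (Sym2 V)))).edgeSet := by
      intro g hg
      exact edgeSet_mono (fromEdgeSet_mono (Set.subset_insert _ _)) (p.edges_subset_edgeSet hg)
    set q := p.transfer _ hsub with hq0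
    have hq : q.IsPath := hp.transfer hsub
    have hqe : q.edges = p.edges := Walk.edges_transfer p hsub
    have henotin : s(u, v) ∉ q.edges := by
      rw [hqe]
      intro h
      have h1 := p.edges_subset_edgeSet h
      rw [edgeSet_fromEdgeSet] at h1
      exact heT h1.1
    set c := Walk.cons hadj q with hc0
    have hcyc : c.IsCycle := (Walk.cons_isCycle_iff q hadj).mpr ⟨hq, henotin⟩
    have hec : s(u, v) ∈ c.edges := by
      rw [hc0, Walk.edges_cons]
      exact List.mem_cons_self
    have hmax : ∀ f ∈ c.edges, ord f ≤ ord s(u, v) := by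
      intro f hfc
      have hfm : f ∈ insert s(u, v) (↑T : Set (Sym2 V)) := by
        have h1 := c.edges_subset_edgeSet hfc
        rw [edgeSet_fromEdgeSet] at h1
        exact h1.1
      rcases Set.mem_insert_iff.mp hfm with rfl | hfT
      · exact le_refl _
      · by_contra hlt
        push_neg at hlt
        have hfT' : f ∈ T := Finset.mem_coe.mp hfT
        have hef : s(u, v) ≠ f := fun h => heT (h ▸ hfT')
        have hbig : (SimpleGraph.fromEdgeSet (insert s(u, v) (↑T : Set (Sym2 V)))).Connected :=
          hTconn.mono (fromEdgeSet_mono (Set.subset_insert _ _))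
        have hdel := delete_connected hbig c hcyc hfc
        have hcoe : (↑(insert s(u, v) (T.erase f)) : Set (Sym2 V)) =
            insert s(u, v) (↑T : Set (Sym2 V)) \ {f} := by
          rw [Finset.coe_insert, Finset.coe_erase, Set.insert_diff_singleton_comm hef]
        rw [← hcoe] at hdel
        have hmemS : insert s(u, v) (T.erase f) ∈ S := by
          rw [hS, Finset.mem_filter]
          exact ⟨Finset.mem_univ _,
            Finset.insert_subset heF ((Finset.erase_subset _ _).trans hTF), hdel⟩
        have hle := hTmin _ hmemS
        have h1 : ∑ x ∈ insert s(u, v) (T.erase f), (ord x + 1) =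
            (ord s(u, v) + 1) + ∑ x ∈ T.erase f, (ord x + 1) :=
          Finset.sum_insert (fun h => heT (Finset.mem_of_mem_erase h))
        have h2 : (ord f + 1) + ∑ x ∈ T.erase f, (ord x + 1) = ∑ x ∈ T, (ord x + 1) :=
          Finset.add_sum_erase T (fun x => ord x + 1) hfT'
        omega
    rw [brokenEdgesOn, Finset.mem_filter]
    exact ⟨Finset.mem_univ _, heE, fun w _ => Finset.mem_univ w, heT,
      u, c, hcyc, hec, hmax⟩
  have hcov : F ⊆ T ∪ brokenEdgesOn H ord Finset.univ T := by
    intro e he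
    by_cases heT : e ∈ T
    · exact Finset.mem_union_left _ heT
    · exact Finset.mem_union_right _ (hbroken e he heT)
  -- uniqueness key lemma
  have key : ∀ T1 T2 : Finset (Sym2 V),
      (SimpleGraph.fromEdgeSet (↑T1 : Set (Sym2 V))).IsTree →
      F ⊆ T1 ∪ brokenEdgesOn H ord Finset.univ T1 →
      T2 ⊆ F →
      (SimpleGraph.fromEdgeSet (↑T2 : Set (Sym2 V))).IsTree →
      ∀ e, e ∈ T2 → e ∉ T1 → ∃ f, f ∈ T1 ∧ f ∉ T2 ∧ ord f < ord e := by
    intro T1 T2 h1tree h1cov h2F h2tree e heT2 heT1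
    have heF : e ∈ F := h2F heT2
    have hebro : e ∈ brokenEdgesOn H ord Finset.univ T1 := by
      rcases Finset.mem_union.mp (h1cov heF) with h | h
      · exact absurd h heT1
      · exact h
    rw [brokenEdgesOn, Finset.mem_filter] at hebro
    obtain ⟨-, heE, -, -, u, c, hcyc, hec, hmax⟩ := hebro
    by_cases hall : ∀ g ∈ c.edges, g ∈ (SimpleGraph.fromEdgeSet (↑T2 : Set (Sym2 V))).edgeSet
    · exact absurd (hcyc.transfer hall) (((isTree_iff _).mp h2tree).2 _)
    · push_neg at hall
      obtain ⟨f, hfc, hfne⟩ := hall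
      have h1 := c.edges_subset_edgeSet hfc
      rw [edgeSet_fromEdgeSet] at h1
      have hfT2 : f ∉ T2 := fun h => hfne (by
        rw [edgeSet_fromEdgeSet]
        exact ⟨Finset.mem_coe.mpr h, h1.2⟩)
      have hfe : f ≠ e := fun h => hfT2 (h ▸ heT2)
      have hfT1 : f ∈ T1 := by
        rcases Set.mem_insert_iff.mp h1.1 with h | h
        · exact absurd h hfe
        · exact Finset.mem_coe.mp h
      exact ⟨f, hfT1, hfT2, lt_of_le_of_ne (hmax f hfc) (fun h => hfe (hord h))⟩
  refine ⟨T, ⟨hTE, hTree, hTF, hcov⟩, ?_⟩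
  rintro T2 ⟨hT2E, hT2tree, hT2F, hT2cov⟩
  by_contra hne
  have hD : ((T2 \ T) ∪ (T \ T2)).Nonempty := by
    rw [Finset.nonempty_iff_ne_empty]
    intro h
    rw [Finset.union_eq_empty, Finset.sdiff_eq_empty_iff_subset,
      Finset.sdiff_eq_empty_iff_subset] at h
    exact hne (Finset.Subset.antisymm h.1 h.2)
  obtain ⟨e, heD, hemin⟩ := Finset.exists_min_image _ ord hD
  rcases Finset.mem_union.mp heD with h | h
  · obtain ⟨f, hf1, hf2, hflt⟩ := key T T2 hTree hcov hT2F hT2tree e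
      (Finset.mem_sdiff.mp h).1 (Finset.mem_sdiff.mp h).2
    have := hemin f (Finset.mem_union_right _ (Finset.mem_sdiff.mpr ⟨hf1, hf2⟩))
    omega
  · obtain ⟨f, hf1, hf2, hflt⟩ := key T2 T hT2tree hT2cov hTF hTree e
      (Finset.mem_sdiff.mp h).1 (Finset.mem_sdiff.mp h).2
    have := hemin f (Finset.mem_union_left _ (Finset.mem_sdiff.mpr ⟨hf1, hf2⟩))
    omega

end VolumePaper
end

section
/- Let H=(V,E) be a finite simple graph with a fixed total order on E, and let (f_e)_{e∈E} be arbitrary real numbers. Then Σ over subsets A ⊆ E with (V,A) connected of (−1)^{|A|} ∏_{e∈A} f_e equals Σ over spanning trees T ⊆ E of (−1)^{|T|} ∏_{e∈T} f_e · ∏_{e∈E_T} (1 − f_e). -/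
open MeasureTheory

attribute [local instance] Classical.propDecidable

namespace VolumePaper

variable {V : Type} [Fintype V]

section Statement4Aux

set_option linter.unusedSectionVars false

open SimpleGraph

/-- Edges of `F` strictly below `e` in the order. -/
noncomputable def low (ord : Sym2 V → ℕ) (F : Finset (Sym2 V)) (e : Sym2 V) :
    Finset (Sym2 V) := F.filter (fun e' => ord e' < ord e)

/-- `e` is "broken" relative to `F`: its endpoints are distinct and connected using
only edges of `F` strictly below `e`. -/
def Brk (ord : Sym2 V → ℕ) (F : Finset (Sym2 V)) (e : Sym2 V) : Prop :=
  ∃ x y : V, e = s(x, y) ∧ x ≠ y ∧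
    (SimpleGraph.fromEdgeSet (↑(low ord F e) : Set (Sym2 V))).Reachable x y

/-- The minimum spanning forest (Kruskal) of `A`: edges of `A` that are not the
maximum edge of any cycle of `A`. -/
noncomputable def mst (ord : Sym2 V → ℕ) (A : Finset (Sym2 V)) : Finset (Sym2 V) :=
  A.filter (fun e => ¬ Brk ord A e)

lemma mst_subset (ord : Sym2 V → ℕ) (A : Finset (Sym2 V)) : mst ord A ⊆ A :=
  Finset.filter_subset _ _

lemma reach_of_adj_reach {G G' : SimpleGraph V}
    (h : ∀ x y, G.Adj x y → G'.Reachable x y) {u v : V} (hr : G.Reachable u v) :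
    G'.Reachable u v := by
  obtain ⟨w⟩ := hr
  induction w with
  | nil => exact Reachable.refl _
  | cons ha _ ih => exact (h _ _ ha).trans ih

lemma brk_iff_reach {ord : Sym2 V → ℕ} {F : Finset (Sym2 V)} {x y : V} (hne : x ≠ y) :
    Brk ord F s(x,y) ↔
    (SimpleGraph.fromEdgeSet (↑(low ord F s(x,y)) : Set (Sym2 V))).Reachable x y := by
  constructor
  · rintro ⟨x', y', hxy, hne', hr⟩
    rw [Sym2.eq_iff] at hxy
    rcases hxy with ⟨rfl, rfl⟩ | ⟨rfl, rfl⟩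
    · exact hr
    · exact hr.symm
  · intro hr; exact ⟨x, y, rfl, hne, hr⟩

lemma sym2_exists_rep (e : Sym2 V) : ∃ x y : V, e = s(x,y) := by
  induction e using Sym2.ind with | _ x y => exact ⟨x, y, rfl⟩

lemma brk_insert_iff {ord : Sym2 V → ℕ} (hord : Function.Injective ord)
    (T : Finset (Sym2 V)) {x y : V} (hne : x ≠ y) :
    (∃ (u : V) (c : (SimpleGraph.fromEdgeSet (insert s(x,y) (↑T : Set (Sym2 V)))).Walk u u),
        c.IsCycle ∧ s(x,y) ∈ c.edges ∧ ∀ e' ∈ c.edges, ord e' ≤ ord s(x,y)) ↔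
    (SimpleGraph.fromEdgeSet (↑(low ord T s(x,y)) : Set (Sym2 V))).Reachable x y := by
  set e : Sym2 V := s(x,y) with he
  set L : Finset (Sym2 V) := low ord T e with hL
  set G2 : SimpleGraph V := SimpleGraph.fromEdgeSet (insert e (↑L : Set (Sym2 V))) with hG2
  have hlowmem : ∀ e' ∈ L, e' ∈ T ∧ ord e' < ord e := by
    intro e' h'; simpa [hL, low] using h'
  constructor
  · rintro ⟨u, c, hc, hce, hbound⟩
    have hedges : ∀ e' ∈ c.edges, e' ∈ G2.edgeSet := by
      intro e' h'
      have h1 := c.edges_subset_edgeSet h'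
      rw [edgeSet_fromEdgeSet] at h1
      rw [hG2, edgeSet_fromEdgeSet]
      refine ⟨?_, h1.2⟩
      rcases h1.1 with h1 | h1
      · rw [h1]; exact Set.mem_insert _ _
      · rcases eq_or_ne e' e with rfl | hnee
        · exact Set.mem_insert _ _
        · have hlt : ord e' < ord e := lt_of_le_of_ne (hbound _ h') (fun hc => hnee (hord hc))
          rw [Finset.mem_coe] at h1
          exact Set.mem_insert_of_mem _ (by simp [hL, low, h1, hlt])
    have hc2 : (c.transfer G2 hedges).IsCycle := hc.transfer _
    have hce2 : e ∈ (c.transfer G2 hedges).edges := by rwa [Walk.edges_transfer]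
    have := (adj_and_reachable_delete_edges_iff_exists_cycle (G := G2) (v := x) (w := y)).2
      ⟨u, c.transfer G2 hedges, hc2, hce2⟩
    refine this.2.mono ?_
    intro a b hab
    change (G2 \ SimpleGraph.fromEdgeSet {s(x, y)}).Adj a b at hab
    rw [sdiff_adj, hG2, fromEdgeSet_adj, fromEdgeSet_adj] at hab
    rw [fromEdgeSet_adj]
    obtain ⟨⟨hmem, hab'⟩, hnot⟩ := hab
    refine ⟨?_, hab'⟩
    rcases hmem with h1 | h1
    · exact absurd ⟨by simp [h1, he], hab'⟩ hnot
    · exact h1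
  · intro hr
    have hadj : G2.Adj x y := by
      rw [hG2, fromEdgeSet_adj]; exact ⟨Set.mem_insert _ _, hne⟩
    have hr2 : (G2 \ SimpleGraph.fromEdgeSet {e}).Reachable x y := by
      refine hr.mono ?_
      intro a b hab
      rw [fromEdgeSet_adj] at hab
      rw [sdiff_adj, hG2, fromEdgeSet_adj, fromEdgeSet_adj]
      refine ⟨⟨Set.mem_insert_of_mem _ hab.1, hab.2⟩, ?_⟩
      rintro ⟨hmem, -⟩
      rw [Finset.mem_coe] at hab
      have hlt := (hlowmem _ hab.1).2
      simp only [Set.mem_singleton_iff] at hmem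
      rw [hmem] at hlt
      exact lt_irrefl _ hlt
    obtain ⟨u, c, hc, hce⟩ :=
      (adj_and_reachable_delete_edges_iff_exists_cycle (G := G2) (v := x) (w := y)).1 ⟨hadj, hr2⟩
    have hedges : ∀ e' ∈ c.edges, e' ∈ (SimpleGraph.fromEdgeSet
        (insert e (↑T : Set (Sym2 V)))).edgeSet := by
      intro e' h'
      have h1 := c.edges_subset_edgeSet h'
      rw [hG2, edgeSet_fromEdgeSet] at h1
      rw [edgeSet_fromEdgeSet]
      refine ⟨?_, h1.2⟩
      rcases h1.1 with h1 | h1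
      · rw [h1]; exact Set.mem_insert _ _
      · rw [Finset.mem_coe] at h1
        exact Set.mem_insert_of_mem _ (hlowmem _ h1).1
    refine ⟨u, c.transfer _ hedges, hc.transfer _, by rwa [Walk.edges_transfer], ?_⟩
    intro e' h'
    rw [Walk.edges_transfer] at h'
    have h1 := c.edges_subset_edgeSet h'
    rw [hG2, edgeSet_fromEdgeSet] at h1
    rcases h1.1 with h1 | h1
    · rw [h1]
    · rw [Finset.mem_coe] at h1
      exact le_of_lt (hlowmem _ h1).2

lemma mst_reach {ord : Sym2 V → ℕ} (A : Finset (Sym2 V)) :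
    ∀ (n : ℕ) (e : Sym2 V), e ∈ A → ord e < n → ∀ x y : V, e = s(x,y) →
    (SimpleGraph.fromEdgeSet
      (↑((mst ord A).filter (fun e' => ord e' ≤ ord e)) : Set (Sym2 V))).Reachable x y := by
  intro n
  induction n using Nat.strong_induction_on with
  | _ n ih =>
    intro e heA hlt x y hexy
    rcases eq_or_ne x y with rfl | hxy
    · exact Reachable.refl _
    by_cases hb : Brk ord A e
    · subst hexy
      rw [brk_iff_reach hxy] at hb
      refine reach_of_adj_reach ?_ hb
      intro a b hab
      rw [fromEdgeSet_adj, Finset.mem_coe, low, Finset.mem_filter] at hab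
      obtain ⟨⟨hmem, hlt'⟩, hne'⟩ := hab
      have h2 := ih (ord s(x,y)) hlt s(a,b) hmem hlt' a b rfl
      refine h2.mono (fromEdgeSet_mono ?_)
      intro z hz
      simp only [Finset.coe_filter, Set.mem_setOf_eq] at hz ⊢
      exact ⟨hz.1, le_of_lt (lt_of_le_of_lt hz.2 hlt')⟩
    · have hmst : e ∈ mst ord A := by simp [mst, heA, hb]
      subst hexy
      refine Adj.reachable ?_
      rw [fromEdgeSet_adj]
      exact ⟨by simp [hmst], hxy⟩

lemma mst_reach' {ord : Sym2 V → ℕ} {A : Finset (Sym2 V)} {e : Sym2 V} (heA : e ∈ A)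
    {x y : V} (hexy : e = s(x,y)) :
    (SimpleGraph.fromEdgeSet (↑(mst ord A) : Set (Sym2 V))).Reachable x y :=
  (mst_reach A (ord e + 1) e heA (Nat.lt_succ_self _) x y hexy).mono
    (fromEdgeSet_mono (by intro z hz; simp only [Finset.coe_filter, Set.mem_setOf_eq] at hz
                          exact hz.1))

lemma mst_connected {ord : Sym2 V → ℕ} {A : Finset (Sym2 V)}
    (hA : (SimpleGraph.fromEdgeSet (↑A : Set (Sym2 V))).Connected) :
    (SimpleGraph.fromEdgeSet (↑(mst ord A) : Set (Sym2 V))).Connected := by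
  have : Nonempty V := hA.nonempty
  refine ⟨fun u v => ?_⟩
  refine reach_of_adj_reach ?_ (hA.preconnected u v)
  intro a b hab
  rw [fromEdgeSet_adj, Finset.mem_coe] at hab
  exact mst_reach' hab.1 rfl

lemma brk_mst {ord : Sym2 V → ℕ} {A : Finset (Sym2 V)} {e : Sym2 V}
    (hb : Brk ord A e) : Brk ord (mst ord A) e := by
  obtain ⟨x, y, hexy, hne, hr⟩ := hb
  refine ⟨x, y, hexy, hne, reach_of_adj_reach ?_ hr⟩
  intro a b hab
  rw [fromEdgeSet_adj, Finset.mem_coe, low, Finset.mem_filter] at hab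
  obtain ⟨⟨hmem, hlt'⟩, hne'⟩ := hab
  have h2 := mst_reach A (ord s(a,b) + 1) s(a,b) hmem (Nat.lt_succ_self _) a b rfl
  refine h2.mono (fromEdgeSet_mono ?_)
  intro z hz
  simp only [Finset.coe_filter, Set.mem_setOf_eq, low] at hz ⊢
  exact ⟨hz.1, lt_of_le_of_lt hz.2 hlt'⟩

lemma mst_acyclic {ord : Sym2 V → ℕ} (hord : Function.Injective ord)
    (A : Finset (Sym2 V)) :
    (SimpleGraph.fromEdgeSet (↑(mst ord A) : Set (Sym2 V))).IsAcyclic := by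
  intro u c hc
  have hlen : c.edges ≠ [] := by
    have h3 := hc.three_le_length
    intro h
    rw [← Walk.length_edges, h] at h3
    simp at h3
  have hnonempty : c.edges.toFinset.Nonempty := by
    obtain ⟨e, he⟩ := List.exists_mem_of_ne_nil _ hlen
    exact ⟨e, List.mem_toFinset.2 he⟩
  obtain ⟨e, heS, hmax⟩ := Finset.exists_max_image _ ord hnonempty
  rw [List.mem_toFinset] at heS
  have hees := c.edges_subset_edgeSet heS
  rw [edgeSet_fromEdgeSet] at hees
  obtain ⟨x, y, hexy⟩ := sym2_exists_rep e
  have hxy : x ≠ y := by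
    intro h; apply hees.2; rw [hexy, h]; exact Sym2.mk_isDiag_iff.mpr rfl
  have hmem : e ∈ mst ord A := by
    have := hees.1; rwa [Finset.mem_coe] at this
  have hedges : ∀ e' ∈ c.edges, e' ∈ (SimpleGraph.fromEdgeSet
      (insert e (↑(mst ord A) : Set (Sym2 V)))).edgeSet := by
    intro e' h'
    have h1 := c.edges_subset_edgeSet h'
    rw [edgeSet_fromEdgeSet] at h1 ⊢
    exact ⟨Set.mem_insert_of_mem _ h1.1, h1.2⟩
  subst hexy
  have hbrk : Brk ord (mst ord A) s(x,y) := by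
    rw [brk_iff_reach hxy, ← (brk_insert_iff hord (mst ord A) hxy)]
    refine ⟨u, c.transfer _ hedges, hc.transfer _, ?_, ?_⟩
    · rw [Walk.edges_transfer]; exact heS
    · intro e' h'
      rw [Walk.edges_transfer] at h'
      exact hmax _ (List.mem_toFinset.2 h')
  have hbrkA : Brk ord A s(x,y) := by
    obtain ⟨x', y', h1, h2, h3⟩ := hbrk
    refine ⟨x', y', h1, h2, h3.mono (fromEdgeSet_mono ?_)⟩
    intro z hz
    simp only [Finset.coe_filter, Set.mem_setOf_eq, low, mst, Finset.mem_filter] at hz ⊢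
    exact ⟨hz.1.1, hz.2⟩
  rw [mst, Finset.mem_filter] at hmem
  exact hmem.2 hbrkA

lemma mem_broken_iff {ord : Sym2 V → ℕ} (hord : Function.Injective ord)
    {H : SimpleGraph V} {T : Finset (Sym2 V)} {e : Sym2 V} :
    e ∈ brokenEdgesOn H ord Finset.univ T ↔
      e ∈ H.edgeSet ∧ e ∉ T ∧ Brk ord T e := by
  obtain ⟨x, y, rfl⟩ := sym2_exists_rep e
  rw [brokenEdgesOn, Finset.mem_filter]
  simp only [Finset.mem_univ, true_and]
  constructor
  · rintro ⟨hE, -, hT, hcyc⟩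
    have hxy : x ≠ y := by
      intro h
      exact H.not_isDiag_of_mem_edgeSet hE (by rw [h]; exact Sym2.mk_isDiag_iff.mpr rfl)
    exact ⟨hE, hT, (brk_iff_reach hxy).2 ((brk_insert_iff hord T hxy).1 hcyc)⟩
  · rintro ⟨hE, hT, hbrk⟩
    have hxy : x ≠ y := by
      intro h
      exact H.not_isDiag_of_mem_edgeSet hE (by rw [h]; exact Sym2.mk_isDiag_iff.mpr rfl)
    exact ⟨hE, fun v _ => trivial, hT,
      (brk_insert_iff hord T hxy).2 ((brk_iff_reach hxy).1 hbrk)⟩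

lemma mst_union_eq {ord : Sym2 V → ℕ} (hord : Function.Injective ord)
    {H : SimpleGraph V} {T B : Finset (Sym2 V)}
    (htree : (SimpleGraph.fromEdgeSet (↑T : Set (Sym2 V))).IsTree)
    (hB : B ⊆ brokenEdgesOn H ord Finset.univ T) :
    mst ord (T ∪ B) = T := by
  apply Finset.Subset.antisymm
  · intro e he
    rw [mst, Finset.mem_filter] at he
    obtain ⟨heTB, hnb⟩ := he
    rcases Finset.mem_union.1 heTB with h | h
    · exact h
    · exfalso
      apply hnb
      obtain ⟨-, -, hbrk⟩ := (mem_broken_iff hord).1 (hB h)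
      obtain ⟨x, y, h1, h2, h3⟩ := hbrk
      refine ⟨x, y, h1, h2, h3.mono (fromEdgeSet_mono ?_)⟩
      intro z hz
      simp only [Finset.coe_filter, Set.mem_setOf_eq, low, Finset.mem_union] at hz ⊢
      exact ⟨Or.inl hz.1, hz.2⟩
  · intro t ht
    rw [mst, Finset.mem_filter]
    refine ⟨Finset.mem_union_left _ ht, ?_⟩
    rintro ⟨x, y, hexy, hne, hr⟩
    -- reach x y avoiding t inside T
    have hreach : (SimpleGraph.fromEdgeSet (↑(T.erase t) : Set (Sym2 V))).Reachable x y := by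
      refine reach_of_adj_reach ?_ hr
      intro a b hab
      rw [fromEdgeSet_adj, Finset.mem_coe, low, Finset.mem_filter, Finset.mem_union] at hab
      obtain ⟨⟨hmem, hlt'⟩, hne'⟩ := hab
      rcases hmem with hmem | hmem
      · refine Adj.reachable ?_
        rw [fromEdgeSet_adj, Finset.mem_coe, Finset.mem_erase]
        exact ⟨⟨fun h => by rw [h] at hlt'; exact lt_irrefl _ hlt', hmem⟩, hne'⟩
      · obtain ⟨-, -, hbrk⟩ := (mem_broken_iff hord).1 (hB hmem)
        rw [brk_iff_reach hne'] at hbrk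
        refine hbrk.mono (fromEdgeSet_mono ?_)
        intro z hz
        simp only [Finset.coe_filter, Set.mem_setOf_eq, low, Finset.mem_coe,
          Finset.mem_erase] at hz ⊢
        refine ⟨fun h => ?_, hz.1⟩
        rw [h] at hz
        exact lt_irrefl _ (lt_trans hz.2 hlt')
    have hadj : (SimpleGraph.fromEdgeSet (↑T : Set (Sym2 V))).Adj x y := by
      rw [fromEdgeSet_adj, Finset.mem_coe, ← hexy]
      exact ⟨ht, hne⟩
    have hr2 : ((SimpleGraph.fromEdgeSet (↑T : Set (Sym2 V))) \ SimpleGraph.fromEdgeSet {s(x,y)}).Reachable x y := by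
      refine hreach.mono ?_
      intro a b hab
      rw [fromEdgeSet_adj, Finset.mem_coe, Finset.mem_erase] at hab
      rw [sdiff_adj, fromEdgeSet_adj, fromEdgeSet_adj]
      refine ⟨⟨hab.1.2, hab.2⟩, ?_⟩
      rintro ⟨hmem, -⟩
      simp only [Set.mem_singleton_iff] at hmem
      rw [← hexy] at hmem
      exact hab.1.1 hmem
    obtain ⟨u, c, hc, -⟩ :=
      (adj_and_reachable_delete_edges_iff_exists_cycle).1 ⟨hadj, hr2⟩
    exact htree.IsAcyclic c hc

end Statement4Aux

theorem statement4' (V : Type) [Fintype V] (H : SimpleGraph V) (ord : Sym2 V → ℕ)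
    (hord : Function.Injective ord) (f : Sym2 V → ℝ) :
    ∑ A ∈ Finset.univ.filter (fun A : Finset (Sym2 V) =>
        (↑A : Set (Sym2 V)) ⊆ H.edgeSet ∧
        (SimpleGraph.fromEdgeSet (↑A : Set (Sym2 V))).Connected),
      (-1 : ℝ) ^ A.card * ∏ e ∈ A, f e
    = ∑ T ∈ Finset.univ.filter (fun T : Finset (Sym2 V) =>
        (↑T : Set (Sym2 V)) ⊆ H.edgeSet ∧
        (SimpleGraph.fromEdgeSet (↑T : Set (Sym2 V))).IsTree),
      (-1 : ℝ) ^ T.card * (∏ e ∈ T, f e) *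
        ∏ e ∈ brokenEdgesOn H ord Finset.univ T, (1 - f e) := by
  classical
  set s2 : Finset (Finset (Sym2 V)) := Finset.univ.filter (fun T : Finset (Sym2 V) =>
      (↑T : Set (Sym2 V)) ⊆ H.edgeSet ∧
      (SimpleGraph.fromEdgeSet (↑T : Set (Sym2 V))).IsTree) with hs2
  have hterm : ∀ T ∈ s2,
      (-1 : ℝ) ^ T.card * (∏ e ∈ T, f e) *
          ∏ e ∈ brokenEdgesOn H ord Finset.univ T, (1 - f e)
        = ∑ B ∈ (brokenEdgesOn H ord Finset.univ T).powerset,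
            (-1 : ℝ) ^ (T ∪ B).card * ∏ e ∈ T ∪ B, f e := by
    intro T hT
    have hnotT : ∀ e ∈ brokenEdgesOn H ord Finset.univ T, e ∉ T := by
      intro e he; exact ((mem_broken_iff hord).1 he).2.1
    have hexp : ∏ e ∈ brokenEdgesOn H ord Finset.univ T, (1 - f e)
        = ∑ B ∈ (brokenEdgesOn H ord Finset.univ T).powerset,
            (-1 : ℝ) ^ B.card * ∏ e ∈ B, f e := by
      have h1 : ∀ e ∈ brokenEdgesOn H ord Finset.univ T,
          (1 - f e : ℝ) = (fun e => -f e) e + (fun _ => (1:ℝ)) e := by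
        intro e _; simp [sub_eq_neg_add]
      rw [Finset.prod_congr rfl h1, Finset.prod_add]
      refine Finset.sum_congr rfl ?_
      intro B hB
      simp only [Finset.prod_const_one, mul_one]
      rw [show (fun e => -f e) = fun e => (-1 : ℝ) * f e by funext e; ring]
      rw [Finset.prod_mul_distrib, Finset.prod_const]
    rw [hexp, Finset.mul_sum]
    refine Finset.sum_congr rfl ?_
    intro B hB
    rw [Finset.mem_powerset] at hB
    have hdisj : Disjoint T B := by
      rw [Finset.disjoint_right]
      intro e heB
      exact hnotT e (hB heB)
    rw [Finset.card_union_of_disjoint hdisj, Finset.prod_union hdisj, pow_add]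
    ring
  rw [Finset.sum_congr rfl hterm, Finset.sum_sigma']
  refine (Finset.sum_nbij' (fun A => (⟨mst ord A, A \ mst ord A⟩ :
      Σ _ : Finset (Sym2 V), Finset (Sym2 V))) (fun p => p.1 ∪ p.2) ?_ ?_ ?_ ?_ ?_)
  · -- hi : A connected ↦ pair in sigma set
    intro A hA
    rw [Finset.mem_filter] at hA
    obtain ⟨-, hAE, hAconn⟩ := hA
    rw [Finset.mem_sigma]
    constructor
    · rw [hs2, Finset.mem_filter]
      refine ⟨Finset.mem_univ _, ?_, ?_⟩
      · exact fun e he => hAE ((Finset.coe_subset.2 (mst_subset ord A)) he)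
      · exact ⟨mst_connected hAconn, mst_acyclic hord A⟩
    · rw [Finset.mem_powerset]
      intro e he
      rw [Finset.mem_sdiff] at he
      obtain ⟨heA, hemst⟩ := he
      have hbrk : Brk ord A e := by
        by_contra hnb
        exact hemst (by simp [mst, heA, hnb])
      exact (mem_broken_iff hord).2 ⟨hAE heA, hemst, brk_mst hbrk⟩
  · -- hj : pair ↦ union connected
    intro p hp
    rw [Finset.mem_sigma] at hp
    obtain ⟨hT, hB⟩ := hp
    rw [hs2, Finset.mem_filter] at hT
    obtain ⟨-, hTE, hTtree⟩ := hT
    rw [Finset.mem_powerset] at hB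
    rw [Finset.mem_filter]
    refine ⟨Finset.mem_univ _, ?_, ?_⟩
    · intro e he
      rw [Finset.mem_coe, Finset.mem_union] at he
      rcases he with he | he
      · exact hTE he
      · exact ((mem_broken_iff hord).1 (hB he)).1
    · exact hTtree.isConnected.mono (SimpleGraph.fromEdgeSet_mono
        (Finset.coe_subset.2 Finset.subset_union_left))
  · -- left_inv
    intro A hA
    rw [Finset.mem_filter] at hA
    exact Finset.union_sdiff_of_subset (mst_subset ord A)
  · -- right_inv
    intro p hp
    rw [Finset.mem_sigma] at hp
    obtain ⟨hT, hB⟩ := hp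
    rw [hs2, Finset.mem_filter] at hT
    rw [Finset.mem_powerset] at hB
    have h1 : mst ord (p.1 ∪ p.2) = p.1 := mst_union_eq hord hT.2.2 hB
    have hdisj : Disjoint p.1 p.2 := by
      rw [Finset.disjoint_right]
      intro e heB
      exact ((mem_broken_iff hord).1 (hB heB)).2.1
    have h2 : (p.1 ∪ p.2) \ mst ord (p.1 ∪ p.2) = p.2 := by
      rw [h1]; exact Finset.union_sdiff_cancel_left hdisj
    exact Sigma.ext h1 (heq_of_eq h2)
  · -- values agree
    intro A hA
    rw [Finset.union_sdiff_of_subset (mst_subset ord A)]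


/-- (Penrose identity) For a finite simple graph `H` with a fixed total
edge order and any reals `(f_e)`, the sum over connected spanning edge sets `A ⊆ E` of
`(−1)^{|A|} ∏_{e∈A} f_e` equals the sum over spanning trees `T` of
`(−1)^{|T|} ∏_{e∈T} f_e ∏_{e∈E_T} (1 − f_e)`. -/
theorem statement4 (V : Type) [Fintype V] (H : SimpleGraph V) (ord : Sym2 V → ℕ)
    (hord : Function.Injective ord) (f : Sym2 V → ℝ) :
    ∑ A ∈ Finset.univ.filter (fun A : Finset (Sym2 V) =>
        (↑A : Set (Sym2 V)) ⊆ H.edgeSet ∧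
        (SimpleGraph.fromEdgeSet (↑A : Set (Sym2 V))).Connected),
      (-1 : ℝ) ^ A.card * ∏ e ∈ A, f e
    = ∑ T ∈ Finset.univ.filter (fun T : Finset (Sym2 V) =>
        (↑T : Set (Sym2 V)) ⊆ H.edgeSet ∧
        (SimpleGraph.fromEdgeSet (↑T : Set (Sym2 V))).IsTree),
      (-1 : ℝ) ^ T.card * (∏ e ∈ T, f e) *
        ∏ e ∈ brokenEdgesOn H ord Finset.univ T, (1 - f e) := by
  exact statement4' V H ord hord f


end VolumePaper
end

section
/- Let G=(V,E) be a finite simple graph on n vertices with a fixed total order on E and let δ ∈ (0,1/2). For every complex number x, Σ_{k≥0} Σ_{P ∈ π_{n−k}(V)} ∏_{S∈P} w(G[S]) · x^k = Σ over forests F ⊆ E of x^{|F|} ∏_T w_T, where the last product is over the connected components T of F having at least one edge; here π_{m}(V) denotes the collection of partitions of V into m nonempty sets. -/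
open MeasureTheory

attribute [local instance] Classical.propDecidable

namespace VolumePaper

variable {V : Type} [Fintype V]

/-! ### Auxiliary machinery for Statement 5 -/

section Aux

set_option linter.unusedSectionVars false
set_option maxHeartbeats 1000000

open SimpleGraph

lemma walk_support_closed {F : Finset (Sym2 V)} {S : Set V}
    (hcl : ∀ e ∈ F, (∃ v ∈ e, v ∈ S) → ∀ v ∈ e, v ∈ S) {u w : V}
    (p : (SimpleGraph.fromEdgeSet (↑F : Set (Sym2 V))).Walk u w) (hu : u ∈ S) :
    ∀ v ∈ p.support, v ∈ S := by
  induction p with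
  | nil => intro v hv; simp at hv; subst hv; exact hu
  | @cons a b c h p ih =>
    intro v hv
    rw [SimpleGraph.Walk.support_cons, List.mem_cons] at hv
    rcases hv with rfl | hv
    · exact hu
    · have he : s(a, b) ∈ F := by
        have := h; rw [SimpleGraph.fromEdgeSet_adj] at this; exact this.1
      have hb : b ∈ S := hcl _ he ⟨a, by simp, hu⟩ b (by simp)
      exact ih hb v hv

lemma exists_lift_walk {G' : SimpleGraph V} {s : Set V} :
    ∀ {u w : V} (p : G'.Walk u w) (hu : u ∈ s) (hw : w ∈ s)
      (hs : ∀ v ∈ p.support, v ∈ s),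
      ∃ q : (G'.induce s).Walk ⟨u, hu⟩ ⟨w, hw⟩,
        q.map (SimpleGraph.Embedding.induce s).toHom = p := by
  intro u w p
  induction p with
  | nil => intro hu hw _; exact ⟨SimpleGraph.Walk.nil, rfl⟩
  | @cons a b c h p ih =>
    intro hu hw hs
    have hb : b ∈ s := hs b (by simp)
    obtain ⟨q, hq⟩ := ih hb hw (fun v hv => hs v (by simp [hv]))
    exact ⟨SimpleGraph.Walk.cons (by exact h) q, by subst hq; rfl⟩

lemma mem_edge_of_mem_support {G' : SimpleGraph V} :
    ∀ {u w : V} (p : G'.Walk u w), ¬p.Nil → ∀ v ∈ p.support, ∃ e ∈ p.edges, v ∈ e := by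
  intro u w p
  induction p with
  | nil => intro h; simp at h
  | @cons a b c h p ih =>
    intro _ v hv
    rw [SimpleGraph.Walk.support_cons, List.mem_cons] at hv
    rcases hv with rfl | hv
    · exact ⟨s(v, b), by simp, by simp⟩
    · by_cases hnil : p.Nil
      · have : v = b := by
          cases p with
          | nil => simpa using hv
          | cons h' p' => simp at hnil
        exact ⟨s(a, b), by simp, by simp [this]⟩
      · obtain ⟨e, he, hve⟩ := ih hnil v hv
        exact ⟨e, by simp [he], hve⟩

lemma mem_support_of_mem_edges' {G' : SimpleGraph V} {u w v : V} {e : Sym2 V}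
    (p : G'.Walk u w) (he : e ∈ p.edges) (hv : v ∈ e) : v ∈ p.support := by
  induction e with
  | h a b =>
    rcases Sym2.mem_iff.1 hv with rfl | rfl
    · exact p.fst_mem_support_of_mem_edges he
    · exact p.snd_mem_support_of_mem_edges he

lemma reachable_of_mem_support {G' : SimpleGraph V} {u w v : V}
    (p : G'.Walk u w) (hv : v ∈ p.support) : G'.Reachable u v :=
  ⟨p.takeUntil v hv⟩

variable {G : SimpleGraph V}

section STLemmas
variable {S : Finset V} {T : Finset (Sym2 V)}

lemma st_reach (h : IsSpanningTreeOn G S T) {u w : V} (hu : u ∈ S) (hw : w ∈ S) :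
    (SimpleGraph.fromEdgeSet (↑T : Set (Sym2 V))).Reachable u w := by
  have hr := h.2.2.isConnected.preconnected ⟨u, hu⟩ ⟨w, hw⟩
  simpa using hr.map (SimpleGraph.Embedding.induce _).toHom

lemma st_acyclic (h : IsSpanningTreeOn G S T) :
    (SimpleGraph.fromEdgeSet (↑T : Set (Sym2 V))).IsAcyclic := by
  intro v c hc
  have hnil : ¬c.Nil := hc.not_nil
  have hsupp : ∀ x ∈ c.support, x ∈ (↑S : Set V) := by
    intro x hx
    obtain ⟨e, he, hxe⟩ := mem_edge_of_mem_support c hnil x hx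
    have heT : e ∈ T := by
      have := c.edges_subset_edgeSet he
      rw [SimpleGraph.edgeSet_fromEdgeSet] at this
      exact this.1
    exact h.2.1 e heT x hxe
  have hv : v ∈ (↑S : Set V) := hsupp v c.start_mem_support
  obtain ⟨q, hq⟩ := exists_lift_walk c hv hv hsupp
  have : q.IsCycle := by
    rw [← SimpleGraph.Walk.map_isCycle_iff_of_injective
      (f := (SimpleGraph.Embedding.induce (↑S : Set V)).toHom)
      (fun a b hab => Subtype.val_injective hab), hq]
    exact hc
  exact h.2.2.IsAcyclic q this

lemma st_empty_card (h : IsSpanningTreeOn G S (∅ : Finset (Sym2 V))) : S.card = 1 := by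
  obtain ⟨⟨v, hv⟩⟩ := h.2.2.isConnected.nonempty
  rw [Finset.card_eq_one]
  refine ⟨v, ?_⟩
  ext u
  simp only [Finset.mem_singleton]
  constructor
  · intro hu
    have hr := h.2.2.isConnected.preconnected ⟨u, hu⟩ ⟨v, hv⟩
    obtain ⟨p⟩ := hr
    cases p with
    | nil => simpa using rfl
    | cons h' p' =>
      exfalso
      have := h'
      simp only [SimpleGraph.comap_adj, SimpleGraph.fromEdgeSet_adj] at this
      simpa using this.1
  · rintro rfl; exact hv

lemma st_verts (h : IsSpanningTreeOn G S T) (hT : T.Nonempty) {v : V} (hv : v ∈ S) :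
    ∃ e ∈ T, v ∈ e := by
  obtain ⟨e₀, he₀⟩ := hT
  have he₀G := h.1 he₀
  obtain ⟨a, b, hab, rfl⟩ : ∃ a b, G.Adj a b ∧ e₀ = s(a, b) := by
    induction e₀ with
    | h x y => exact ⟨x, y, he₀G, rfl⟩
  have haS : a ∈ S := h.2.1 _ he₀ a (by simp)
  have hbS : b ∈ S := h.2.1 _ he₀ b (by simp)
  obtain ⟨u, huS, huv⟩ : ∃ u, u ∈ S ∧ u ≠ v := by
    by_cases hva : v = a
    · exact ⟨b, hbS, fun hbv => hab.ne (by rw [hbv, hva])⟩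
    · exact ⟨a, haS, fun hav => hva (by rw [hav])⟩
  have hr := h.2.2.isConnected.preconnected ⟨v, hv⟩ ⟨u, huS⟩
  obtain ⟨p⟩ := hr
  cases p with
  | nil => exact absurd rfl huv
  | @cons _ x _ h' p' =>
    have := h'
    simp only [SimpleGraph.comap_adj, SimpleGraph.fromEdgeSet_adj] at this
    exact ⟨s(v, ↑x), this.1, by simp⟩

lemma st_card (h : IsSpanningTreeOn G S T) : T.card + 1 = S.card := by
  classical
  set H := SimpleGraph.induce (↑S : Set V) (SimpleGraph.fromEdgeSet (↑T : Set (Sym2 V))) with hH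
  have hcard : H.edgeFinset.card + 1 = Fintype.card ↥(↑S : Set V) := h.2.2.card_edgeFinset
  have hS : Fintype.card ↥(↑S : Set V) = S.card := by simp
  have hT : H.edgeFinset.card = T.card := by
    apply Finset.card_bij (fun e _ => Sym2.map Subtype.val e)
    · intro e he
      rw [SimpleGraph.mem_edgeFinset] at he
      induction e with
      | h a b =>
        rw [SimpleGraph.mem_edgeSet] at he
        have : (SimpleGraph.fromEdgeSet (↑T : Set (Sym2 V))).Adj ↑a ↑b := he
        rw [SimpleGraph.fromEdgeSet_adj] at this
        simpa using this.1
    · intro e₁ h₁ e₂ h₂ heq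
      exact Sym2.map.injective Subtype.val_injective heq
    · intro e he
      have heG := h.1 he
      obtain ⟨a, b, hab, rfl⟩ : ∃ a b, G.Adj a b ∧ e = s(a, b) := by
        induction e with
        | h x y => exact ⟨x, y, heG, rfl⟩
      have haS : a ∈ (↑S : Set V) := h.2.1 _ he a (by simp)
      have hbS : b ∈ (↑S : Set V) := h.2.1 _ he b (by simp)
      refine ⟨s(⟨a, haS⟩, ⟨b, hbS⟩), ?_, by simp⟩
      rw [SimpleGraph.mem_edgeFinset, SimpleGraph.mem_edgeSet]
      show (SimpleGraph.fromEdgeSet (↑T : Set (Sym2 V))).Adj a b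
      rw [SimpleGraph.fromEdgeSet_adj]
      exact ⟨he, hab.ne⟩
  omega

end STLemmas

/-- The connected component of `v` in the graph with edge set `F`. -/
noncomputable def cmp (F : Finset (Sym2 V)) (v : V) : Finset V :=
  Finset.univ.filter (fun u => (SimpleGraph.fromEdgeSet (↑F : Set (Sym2 V))).Reachable v u)

/-- The partition of `V` into connected components of `F`. -/
noncomputable def Pof (F : Finset (Sym2 V)) : Finset (Finset V) :=
  Finset.univ.image (cmp F)

/-- The edges of `F` inside a set `S`. -/
noncomputable def tof (F : Finset (Sym2 V)) (S : Finset V) : Finset (Sym2 V) :=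
  F.filter (fun e => ∀ v ∈ e, v ∈ S)

lemma mem_cmp {F : Finset (Sym2 V)} {v u : V} :
    u ∈ cmp F v ↔ (SimpleGraph.fromEdgeSet (↑F : Set (Sym2 V))).Reachable v u := by
  simp [cmp]

lemma self_mem_cmp {F : Finset (Sym2 V)} {v : V} : v ∈ cmp F v :=
  mem_cmp.2 (SimpleGraph.Reachable.refl v)

lemma cmp_eq_of_reach {F : Finset (Sym2 V)} {v u : V}
    (h : (SimpleGraph.fromEdgeSet (↑F : Set (Sym2 V))).Reachable v u) :
    cmp F u = cmp F v := by
  ext w; rw [mem_cmp, mem_cmp]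
  exact ⟨fun h' => h.trans h', fun h' => h.symm.trans h'⟩

section Forward
variable {P : Finset (Finset V)}
  {t : (S : Finset V) → S ∈ P → Finset (Sym2 V)}
  (hdisj : ∀ S ∈ P, ∀ S' ∈ P, S ≠ S' → Disjoint S S')
  (hsup : P.sup id = Finset.univ)
  (hst : ∀ (S : Finset V) (h : S ∈ P), IsSpanningTreeOn G S (t S h))

/-- The forest associated to a partition with a choice of spanning trees. -/
noncomputable def unionF (P : Finset (Finset V))
    (t : (S : Finset V) → S ∈ P → Finset (Sym2 V)) : Finset (Sym2 V) :=
  P.attach.biUnion (fun S => t S.1 S.2)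

lemma mem_unionF {e : Sym2 V} :
    e ∈ unionF P t ↔ ∃ S : Finset V, ∃ h : S ∈ P, e ∈ t S h := by
  simp [unionF]

include hst in
lemma unionF_sub_edgeSet : (↑(unionF P t) : Set (Sym2 V)) ⊆ G.edgeSet := by
  intro e he
  obtain ⟨S, h, heT⟩ := mem_unionF.1 he
  exact (hst S h).1 heT

include hdisj hst in
lemma part_unique {e : Sym2 V} {S S' : Finset V} {h : S ∈ P} {h' : S' ∈ P}
    (he : e ∈ t S h) (he' : e ∈ t S' h') : S = S' := by
  by_contra hne
  have heG : e ∈ G.edgeSet := (hst S h).1 he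
  obtain ⟨a, b, hab, rfl⟩ : ∃ a b, G.Adj a b ∧ e = s(a, b) := by
    induction e with
    | h x y => exact ⟨x, y, heG, rfl⟩
  have haS : a ∈ S := (hst S h).2.1 _ he a (by simp)
  have haS' : a ∈ S' := (hst S' h').2.1 _ he' a (by simp)
  exact (Finset.disjoint_left.1 (hdisj S h S' h' hne)) haS haS'

include hdisj hst in
lemma part_closed {S : Finset V} (hS : S ∈ P) :
    ∀ e ∈ unionF P t, (∃ v ∈ e, v ∈ (↑S : Set V)) → ∀ v ∈ e, v ∈ (↑S : Set V) := by
  rintro e he ⟨x, hxe, hxS⟩ v hve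
  obtain ⟨S', h', heT⟩ := mem_unionF.1 he
  have hxS' : x ∈ S' := (hst S' h').2.1 _ heT x hxe
  have : S = S' := by
    by_contra hne
    exact (Finset.disjoint_left.1 (hdisj S hS S' h' hne)) hxS hxS'
  subst this
  exact (hst S hS).2.1 _ heT v hve

include hdisj hst in
lemma unionF_acyclic :
    (SimpleGraph.fromEdgeSet (↑(unionF P t) : Set (Sym2 V))).IsAcyclic := by
  intro v c hc
  have hnil : ¬c.Nil := hc.not_nil
  obtain ⟨e, hce, hve⟩ := mem_edge_of_mem_support c hnil v c.start_mem_support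
  have heF : e ∈ unionF P t := by
    have := c.edges_subset_edgeSet hce
    rw [SimpleGraph.edgeSet_fromEdgeSet] at this
    exact this.1
  obtain ⟨S, hS, heT⟩ := mem_unionF.1 heF
  have hvS : v ∈ (↑S : Set V) := (hst S hS).2.1 _ heT v hve
  have hsupp : ∀ x ∈ c.support, x ∈ (↑S : Set V) :=
    walk_support_closed (part_closed hdisj hst hS) c hvS
  have hedges : ∀ e' ∈ c.edges,
      e' ∈ (SimpleGraph.fromEdgeSet (↑(t S hS) : Set (Sym2 V))).edgeSet := by
    intro e' he'
    have h1 := c.edges_subset_edgeSet he'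
    rw [SimpleGraph.edgeSet_fromEdgeSet] at h1
    obtain ⟨S', h', he'T⟩ := mem_unionF.1 h1.1
    obtain ⟨a, b, hab, rfl⟩ : ∃ a b, G.Adj a b ∧ e' = s(a, b) := by
      have heG : e' ∈ G.edgeSet := (hst S' h').1 he'T
      induction e' with
      | h x y => exact ⟨x, y, heG, rfl⟩
    have haS : a ∈ (↑S : Set V) := hsupp a (mem_support_of_mem_edges' c he' (by simp))
    have haS' : a ∈ S' := (hst S' h').2.1 _ he'T a (by simp)
    have hSS' : S = S' := by
      by_contra hne
      exact (Finset.disjoint_left.1 (hdisj S hS S' h' hne)) haS haS'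
    subst hSS'
    rw [SimpleGraph.edgeSet_fromEdgeSet]
    exact ⟨he'T, h1.2⟩
  have hc' := (hc.transfer hedges)
  exact st_acyclic (hst S hS) _ hc'

include hdisj hsup hst in
lemma cmp_unionF {S : Finset V} (hS : S ∈ P) {v : V} (hv : v ∈ S) :
    cmp (unionF P t) v = S := by
  ext u
  rw [mem_cmp]
  constructor
  · rintro ⟨p⟩
    exact walk_support_closed (part_closed hdisj hst hS) p hv u p.end_mem_support
  · intro hu
    exact (st_reach (hst S hS) hv hu).mono
      (SimpleGraph.fromEdgeSet_mono (by
        intro e he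
        exact mem_unionF.2 ⟨S, hS, he⟩))

include hdisj hsup hst in
lemma Pof_unionF : Pof (unionF P t) = P := by
  ext S
  simp only [Pof, Finset.mem_image, Finset.mem_univ, true_and]
  constructor
  · rintro ⟨v, rfl⟩
    have hv : v ∈ P.sup id := by rw [hsup]; exact Finset.mem_univ v
    rw [Finset.mem_sup] at hv
    obtain ⟨S', hS', hvS'⟩ := hv
    rw [cmp_unionF hdisj hsup hst hS' hvS']
    exact hS'
  · intro hS
    have hne : S.Nonempty := (hst S hS).2.2.isConnected.nonempty.elim
      (fun x => ⟨x.1, x.2⟩)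
    obtain ⟨v, hv⟩ := hne
    exact ⟨v, cmp_unionF hdisj hsup hst hS hv⟩

include hdisj hst in
lemma tof_unionF {S : Finset V} (hS : S ∈ P) : tof (unionF P t) S = t S hS := by
  ext e
  simp only [tof, Finset.mem_filter]
  constructor
  · rintro ⟨heF, hend⟩
    obtain ⟨S', h', heT⟩ := mem_unionF.1 heF
    have heG : e ∈ G.edgeSet := (hst S' h').1 heT
    obtain ⟨a, b, hab, rfl⟩ : ∃ a b, G.Adj a b ∧ e = s(a, b) := by
      induction e with
      | h x y => exact ⟨x, y, heG, rfl⟩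
    have haS : a ∈ S := hend a (by simp)
    have haS' : a ∈ S' := (hst S' h').2.1 _ heT a (by simp)
    have : S = S' := by
      by_contra hne
      exact (Finset.disjoint_left.1 (hdisj S hS S' h' hne)) haS haS'
    subst this
    exact heT
  · intro he
    exact ⟨mem_unionF.2 ⟨S, hS, he⟩, fun v hv => (hst S hS).2.1 _ he v hv⟩

include hdisj hsup hst in
lemma comps_unionF :
    comps (unionF P t)
      = (P.attach.filter (fun S => (t S.1 S.2).Nonempty)).image (fun S => t S.1 S.2) := by
  have key : ∀ (S : Finset V) (hS : S ∈ P), ∀ e ∈ t S hS,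
      (unionF P t).filter (fun e' => ∃ u ∈ e, ∃ v ∈ e',
        (SimpleGraph.fromEdgeSet (↑(unionF P t) : Set (Sym2 V))).Reachable u v) = t S hS := by
    intro S hS e he
    have heG : e ∈ G.edgeSet := (hst S hS).1 he
    ext e'
    rw [Finset.mem_filter]
    constructor
    · rintro ⟨he'F, u, hue, v, hve', hr⟩
      have huS : u ∈ S := (hst S hS).2.1 _ he u hue
      have hvS : v ∈ S := by
        have := cmp_unionF hdisj hsup hst hS huS
        rw [← this]; exact mem_cmp.2 hr
      obtain ⟨S', h', he'T⟩ := mem_unionF.1 he'F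
      have hvS' : v ∈ S' := (hst S' h').2.1 _ he'T v hve'
      have : S = S' := by
        by_contra hne
        exact (Finset.disjoint_left.1 (hdisj S hS S' h' hne)) hvS hvS'
      subst this
      exact he'T
    · intro he'
      refine ⟨mem_unionF.2 ⟨S, hS, he'⟩, ?_⟩
      obtain ⟨a, b, hab, rfl⟩ : ∃ a b, G.Adj a b ∧ e = s(a, b) := by
        induction e with
        | h x y => exact ⟨x, y, heG, rfl⟩
      obtain ⟨c, d, hcd, rfl⟩ : ∃ c d, G.Adj c d ∧ e' = s(c, d) := by
        have he'G : e' ∈ G.edgeSet := (hst S hS).1 he'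
        induction e' with
        | h x y => exact ⟨x, y, he'G, rfl⟩
      refine ⟨a, by simp, c, by simp, ?_⟩
      have haS : a ∈ S := (hst S hS).2.1 _ he a (by simp)
      have hcS : c ∈ S := (hst S hS).2.1 _ he' c (by simp)
      exact (st_reach (hst S hS) haS hcS).mono
        (SimpleGraph.fromEdgeSet_mono (by
          intro f hf
          exact mem_unionF.2 ⟨S, hS, hf⟩))
  ext T
  simp only [comps, Finset.mem_image, Finset.mem_filter, Finset.mem_attach, true_and]
  constructor
  · rintro ⟨e, heF, rfl⟩
    obtain ⟨S, hS, heT⟩ := mem_unionF.1 heF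
    exact ⟨⟨S, hS⟩, ⟨e, heT⟩, (key S hS e heT).symm⟩
  · rintro ⟨⟨S, hS⟩, ⟨e, he⟩, rfl⟩
    exact ⟨e, mem_unionF.2 ⟨S, hS, he⟩, key S hS e he⟩

include hdisj hst in
lemma unionF_card :
    (unionF P t).card = ∑ S ∈ P.attach, (t S.1 S.2).card := by
  apply Finset.card_biUnion
  rintro ⟨S, hS⟩ - ⟨S', hS'⟩ - hne
  rw [Function.onFun, Finset.disjoint_left]
  intro e he he'
  exact hne (by
    have := part_unique hdisj hst he he'
    exact Subtype.ext this)

lemma partition_sum_card {P : Finset (Finset V)}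
    (hdisj : ∀ S ∈ P, ∀ S' ∈ P, S ≠ S' → Disjoint S S')
    (hsup : P.sup id = Finset.univ) :
    ∑ S ∈ P, S.card = Fintype.card V := by
  have : (Finset.univ : Finset V) = P.biUnion id := by
    rw [← Finset.sup_eq_biUnion, hsup]
  rw [Fintype.card, this]
  exact (Finset.card_biUnion (fun x hx y hy hxy => hdisj x hx y hy hxy)).symm

include hdisj hsup hst in
lemma unionF_card_add :
    (unionF P t).card + P.card = Fintype.card V := by
  rw [unionF_card hdisj hst]
  have h1 : ∑ S ∈ P.attach, (t S.1 S.2).card + P.card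
      = ∑ S ∈ P.attach, ((t S.1 S.2).card + 1) := by
    rw [Finset.sum_add_distrib]
    simp [Finset.card_attach]
  rw [h1]
  have h2 : ∀ S ∈ P.attach, (t S.1 S.2).card + 1 = S.1.card := fun S _ => st_card (hst S.1 S.2)
  rw [Finset.sum_congr rfl h2]
  rw [Finset.sum_attach P (fun S => S.card)]
  exact partition_sum_card hdisj hsup

end Forward

section Backward
variable {F : Finset (Sym2 V)}
  (hFG : (↑F : Set (Sym2 V)) ⊆ G.edgeSet)
  (hacyc : (SimpleGraph.fromEdgeSet (↑F : Set (Sym2 V))).IsAcyclic)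

include hFG in
lemma exists_rep {e : Sym2 V} (he : e ∈ F) : ∃ a b, G.Adj a b ∧ e = s(a, b) := by
  have heG : e ∈ G.edgeSet := hFG he
  induction e with
  | h x y => exact ⟨x, y, heG, rfl⟩

lemma Pof_nonempty {S : Finset V} (hS : S ∈ Pof F) : S.Nonempty := by
  obtain ⟨v, -, rfl⟩ := Finset.mem_image.1 hS
  exact ⟨v, self_mem_cmp⟩

lemma Pof_disjoint {S : Finset V} (hS : S ∈ Pof F) {S' : Finset V} (hS' : S' ∈ Pof F)
    (hne : S ≠ S') : Disjoint S S' := by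
  obtain ⟨v, -, rfl⟩ := Finset.mem_image.1 hS
  obtain ⟨v', -, rfl⟩ := Finset.mem_image.1 hS'
  rw [Finset.disjoint_left]
  intro u hu hu'
  exact hne ((cmp_eq_of_reach (mem_cmp.1 hu)).symm.trans (cmp_eq_of_reach (mem_cmp.1 hu')))

lemma Pof_sup : (Pof F).sup id = (Finset.univ : Finset V) := by
  apply Finset.eq_univ_of_forall
  intro v
  rw [Finset.mem_sup]
  exact ⟨cmp F v, Finset.mem_image.2 ⟨v, Finset.mem_univ v, rfl⟩, self_mem_cmp⟩

include hFG hacyc in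
lemma tof_spanning {S : Finset V} (hS : S ∈ Pof F) : IsSpanningTreeOn G S (tof F S) := by
  obtain ⟨v, -, rfl⟩ := Finset.mem_image.1 hS
  refine ⟨fun e he => hFG (Finset.mem_filter.1 he).1,
    fun e he => (Finset.mem_filter.1 he).2, ?_, ?_⟩
  · rw [SimpleGraph.connected_iff]
    constructor
    · rintro ⟨u, hu⟩ ⟨w, hw⟩
      obtain ⟨p⟩ := (mem_cmp.1 hu).symm.trans (mem_cmp.1 hw)
      have hsupp : ∀ x ∈ p.support, x ∈ (↑(cmp F v) : Set V) := by
        intro x hx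
        exact mem_cmp.2 ((mem_cmp.1 hu).trans (reachable_of_mem_support p hx))
      have hedges : ∀ e ∈ p.edges,
          e ∈ (SimpleGraph.fromEdgeSet (↑(tof F (cmp F v)) : Set (Sym2 V))).edgeSet := by
        intro e he
        have h1 := p.edges_subset_edgeSet he
        rw [SimpleGraph.edgeSet_fromEdgeSet] at h1
        rw [SimpleGraph.edgeSet_fromEdgeSet]
        refine ⟨Finset.mem_filter.2 ⟨h1.1, ?_⟩, h1.2⟩
        intro x hx
        exact hsupp x (mem_support_of_mem_edges' p he hx)
      obtain ⟨q, -⟩ := exists_lift_walk (p.transfer _ hedges) hu hw (by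
        rw [SimpleGraph.Walk.support_transfer]
        exact hsupp)
      exact ⟨q⟩
    · exact ⟨⟨v, self_mem_cmp⟩⟩
  · intro x c hc
    have : ((c.map (SimpleGraph.Embedding.induce
        (↑(cmp F v) : Set V)).toHom).mapLe
        (SimpleGraph.fromEdgeSet_mono (by
          intro e he
          exact (Finset.mem_filter.1 he).1))).IsCycle := by
      apply SimpleGraph.Walk.IsCycle.mapLe
      exact SimpleGraph.Walk.IsCycle.map
        (fun a b hab => Subtype.val_injective hab) hc
    exact hacyc _ this

include hFG in
lemma unionF_tof :
    (Pof F).attach.biUnion (fun S => tof F S.1) = F := by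
  apply Finset.Subset.antisymm
  · intro e he
    rw [Finset.mem_biUnion] at he
    obtain ⟨S, -, heS⟩ := he
    exact (Finset.mem_filter.1 heS).1
  · intro e he
    obtain ⟨a, b, hab, rfl⟩ := exists_rep hFG he
    have hadj : (SimpleGraph.fromEdgeSet (↑F : Set (Sym2 V))).Adj a b :=
      (SimpleGraph.fromEdgeSet_adj _).2 ⟨he, hab.ne⟩
    rw [Finset.mem_biUnion]
    refine ⟨⟨cmp F a, Finset.mem_image.2 ⟨a, Finset.mem_univ a, rfl⟩⟩,
      Finset.mem_attach _ _, ?_⟩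
    refine Finset.mem_filter.2 ⟨he, ?_⟩
    intro x hx
    rcases Sym2.mem_iff.1 hx with rfl | rfl
    · exact self_mem_cmp
    · exact mem_cmp.2 hadj.reachable

end Backward

section Weights
variable {S : Finset V} {T : Finset (Sym2 V)}

lemma verts_eq (h : IsSpanningTreeOn G S T) (hT : T.Nonempty) : verts T = S := by
  ext v
  simp only [verts, Finset.mem_filter, Finset.mem_univ, true_and]
  constructor
  · rintro ⟨e, he, hv⟩
    exact h.2.1 e he v hv
  · intro hv
    exact st_verts h hT hv

lemma treeWeight_eq (ord : Sym2 V → ℕ) (δ : ℝ)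
    (h : IsSpanningTreeOn G S T) (hT : T.Nonempty) :
    treeWeight G ord δ T
      = (1/2 + δ) ^ (-(S.card : ℤ)) * (-1 : ℝ) ^ T.card * treeIntegral G ord δ S T := by
  rw [treeWeight, verts_eq h hT]

lemma brokenEdgesOn_singleton (ord : Sym2 V → ℕ)
    (hS : S.card = 1) : brokenEdgesOn G ord S (∅ : Finset (Sym2 V)) = ∅ := by
  rw [Finset.eq_empty_iff_forall_notMem]
  intro e he
  rw [brokenEdgesOn, Finset.mem_filter] at he
  obtain ⟨-, heG, hend, -⟩ := he
  obtain ⟨a, b, hab, rfl⟩ : ∃ a b, G.Adj a b ∧ e = s(a, b) := by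
    induction e with
    | h x y => exact ⟨x, y, heG, rfl⟩
  obtain ⟨v, hv⟩ := Finset.card_eq_one.1 hS
  subst hv
  have ha := hend a (by simp)
  have hb := hend b (by simp)
  simp only [Finset.mem_singleton] at ha hb
  exact hab.ne (ha.trans hb.symm)

lemma singleton_weight (ord : Sym2 V → ℕ) {δ : ℝ}
    (hδ : δ ∈ Set.Ioo (0:ℝ) (1/2)) (hS : S.card = 1) :
    (1/2 + δ) ^ (-(S.card : ℤ)) * (-1 : ℝ) ^ (∅ : Finset (Sym2 V)).card
      * treeIntegral G ord δ S (∅ : Finset (Sym2 V)) = 1 := by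
  have h0 : (0:ℝ) < 1/2 + δ := by have := hδ.1; linarith
  have hint : treeIntegral G ord δ S (∅ : Finset (Sym2 V)) = (1/2 + δ) ^ S.card := by
    rw [treeIntegral, brokenEdgesOn_singleton ord hS]
    simp only [Finset.prod_empty, mul_one]
    rw [MeasureTheory.setIntegral_const, smul_eq_mul, mul_one,
      MeasureTheory.measureReal_def, MeasureTheory.volume_pi_pi]
    simp only [Real.volume_Icc, sub_zero]
    rw [Finset.prod_const, ENNReal.toReal_pow, ENNReal.toReal_ofReal h0.le]
    simp [Fintype.card_coe]
  rw [hint, hS]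
  simp only [Finset.card_empty, pow_zero, mul_one]
  rw [pow_one, show (-((1:ℕ):ℤ)) = -1 by norm_num, zpow_neg_one]
  exact inv_mul_cancel₀ h0.ne'

end Weights

/-- The finset of partitions of `V`. -/
noncomputable def partsF (V : Type) [Fintype V] : Finset (Finset (Finset V)) :=
  Finset.univ.filter (fun P : Finset (Finset V) =>
    (∀ S ∈ P, S.Nonempty) ∧ (∀ S ∈ P, ∀ S' ∈ P, S ≠ S' → Disjoint S S') ∧
    P.sup id = Finset.univ)

/-- The finset of spanning trees of `G[S]`. -/
noncomputable def treesF (G : SimpleGraph V) (S : Finset V) : Finset (Finset (Sym2 V)) :=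
  Finset.univ.filter (fun T => IsSpanningTreeOn G S T)

end Aux

/-- For an `n`-vertex graph `G` with a fixed total edge order,
`δ ∈ (0,1/2)` and `x ∈ ℂ`,
`∑_{k≥0} ∑_{P ∈ π_{n−k}(V)} ∏_{S∈P} w(G[S]) · x^k =
 ∑_{F ⊆ E forest} x^{|F|} ∏_{T comp. of F} w_T`. -/
theorem statement5 (V : Type) [Fintype V] (G : SimpleGraph V) (ord : Sym2 V → ℕ)
    (hord : Function.Injective ord) (δ : ℝ) (hδ : δ ∈ Set.Ioo (0:ℝ) (1/2)) (x : ℂ) :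
    ∑ k ∈ Finset.range (Fintype.card V + 1),
      (∑ P ∈ Finset.univ.filter (fun P : Finset (Finset V) =>
          (∀ S ∈ P, S.Nonempty) ∧
          (∀ S ∈ P, ∀ S' ∈ P, S ≠ S' → Disjoint S S') ∧
          P.sup id = Finset.univ ∧ P.card + k = Fintype.card V),
        ∏ S ∈ P, (indWeight G ord δ S : ℂ)) * x ^ k
    = ∑ F ∈ Finset.univ.filter (fun F : Finset (Sym2 V) => IsForestOn G Finset.univ F),
        x ^ F.card * ∏ T ∈ comps F, (treeWeight G ord δ T : ℂ) := by
  classical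
  have hcardle : ∀ P ∈ partsF V, P.card ≤ Fintype.card V := by
    intro P hP
    rw [partsF, Finset.mem_filter] at hP
    obtain ⟨-, h1, h2, h3⟩ := hP
    calc P.card = ∑ _S ∈ P, 1 := by simp
      _ ≤ ∑ S ∈ P, S.card := Finset.sum_le_sum (fun S hS => Finset.card_pos.2 (h1 S hS))
      _ = Fintype.card V := partition_sum_card h2 h3
  calc ∑ k ∈ Finset.range (Fintype.card V + 1),
      (∑ P ∈ Finset.univ.filter (fun P : Finset (Finset V) =>
          (∀ S ∈ P, S.Nonempty) ∧
          (∀ S ∈ P, ∀ S' ∈ P, S ≠ S' → Disjoint S S') ∧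
          P.sup id = Finset.univ ∧ P.card + k = Fintype.card V),
        ∏ S ∈ P, (indWeight G ord δ S : ℂ)) * x ^ k
      = ∑ k ∈ Finset.range (Fintype.card V + 1), ∑ P ∈ partsF V,
          (if P.card + k = Fintype.card V then
            (∏ S ∈ P, (indWeight G ord δ S : ℂ)) * x ^ k else 0) := by
        refine Finset.sum_congr rfl fun k _ => ?_
        have hflt : (Finset.univ.filter (fun P : Finset (Finset V) =>
            (∀ S ∈ P, S.Nonempty) ∧ (∀ S ∈ P, ∀ S' ∈ P, S ≠ S' → Disjoint S S') ∧
            P.sup id = Finset.univ ∧ P.card + k = Fintype.card V))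
            = (partsF V).filter (fun P => P.card + k = Fintype.card V) := by
          rw [partsF, Finset.filter_filter]
          apply Finset.filter_congr
          intro P _
          constructor
          · rintro ⟨a, b, c, d⟩; exact ⟨⟨a, b, c⟩, d⟩
          · rintro ⟨⟨a, b, c⟩, d⟩; exact ⟨a, b, c, d⟩
        rw [hflt, Finset.sum_filter, Finset.sum_mul]
        refine Finset.sum_congr rfl fun P _ => ?_
        rw [ite_mul, zero_mul]
    _ = ∑ P ∈ partsF V, ∑ k ∈ Finset.range (Fintype.card V + 1),
          (if P.card + k = Fintype.card V then
            (∏ S ∈ P, (indWeight G ord δ S : ℂ)) * x ^ k else 0) := Finset.sum_comm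
    _ = ∑ P ∈ partsF V,
          (∏ S ∈ P, (indWeight G ord δ S : ℂ)) * x ^ (Fintype.card V - P.card) := by
        refine Finset.sum_congr rfl fun P hP => ?_
        have hle := hcardle P hP
        rw [Finset.sum_eq_single_of_mem (Fintype.card V - P.card)
          (Finset.mem_range.2 (by omega)) (fun k _ hk => if_neg (by omega))]
        rw [if_pos (by omega)]
    _ = ∑ P ∈ partsF V, ∑ t ∈ P.pi (fun S => treesF G S),
          (∏ S ∈ P.attach,
            (((1/2 + δ) ^ (-((S : Finset V).card : ℤ)) * (-1 : ℝ) ^ (t S.1 S.2).card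
              * treeIntegral G ord δ S.1 (t S.1 S.2) : ℝ) : ℂ))
            * x ^ (Fintype.card V - P.card) := by
        refine Finset.sum_congr rfl fun P hP => ?_
        rw [← Finset.sum_mul]
        congr 1
        have hiw : ∀ S : Finset V, ((indWeight G ord δ S : ℝ) : ℂ)
            = ∑ T ∈ treesF G S,
              (((1/2 + δ) ^ (-(S.card : ℤ)) * (-1 : ℝ) ^ T.card
                * treeIntegral G ord δ S T : ℝ) : ℂ) := by
          intro S
          rw [indWeight, treesF]
          push_cast
          rfl
        rw [Finset.prod_congr rfl (fun S _ => hiw S)]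
        exact Finset.prod_sum P (fun S => treesF G S) _
    _ = ∑ p ∈ (partsF V).sigma (fun P => P.pi (fun S => treesF G S)),
          (∏ S ∈ p.1.attach,
            (((1/2 + δ) ^ (-((S : Finset V).card : ℤ)) * (-1 : ℝ) ^ (p.2 S.1 S.2).card
              * treeIntegral G ord δ S.1 (p.2 S.1 S.2) : ℝ) : ℂ))
            * x ^ (Fintype.card V - p.1.card) := Finset.sum_sigma' _ _ _
    _ = ∑ F ∈ Finset.univ.filter (fun F : Finset (Sym2 V) => IsForestOn G Finset.univ F),
        x ^ F.card * ∏ T ∈ comps F, (treeWeight G ord δ T : ℂ) := by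
        refine Finset.sum_nbij' (fun p => unionF p.1 p.2)
          (fun F => ⟨Pof F, fun S _ => tof F S⟩) ?_ ?_ ?_ ?_ ?_
        · -- maps into forests
          rintro ⟨P, t⟩ hmem
          obtain ⟨hP, ht⟩ := Finset.mem_sigma.1 hmem
          rw [partsF, Finset.mem_filter] at hP
          obtain ⟨-, h1, h2, h3⟩ := hP
          dsimp only at h1 h2 h3
          have hst : ∀ (S : Finset V) (h : S ∈ P), IsSpanningTreeOn G S (t S h) := by
            intro S h
            have := Finset.mem_pi.1 ht S h
            rw [treesF, Finset.mem_filter] at this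
            exact this.2
          rw [Finset.mem_filter]
          exact ⟨Finset.mem_univ _,
            unionF_sub_edgeSet hst, fun e _ v _ => Finset.mem_univ v,
            unionF_acyclic h2 hst⟩
        · -- inverse maps into partitions with trees
          intro F hF
          rw [Finset.mem_filter] at hF
          obtain ⟨-, hFG, -, hacyc⟩ := hF
          rw [Finset.mem_sigma]
          constructor
          · rw [partsF, Finset.mem_filter]
            exact ⟨Finset.mem_univ _, fun S hS => Pof_nonempty hS,
              fun S hS S' hS' hne => Pof_disjoint hS hS' hne, Pof_sup⟩
          · rw [Finset.mem_pi]
            intro S hS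
            rw [treesF, Finset.mem_filter]
            exact ⟨Finset.mem_univ _, tof_spanning hFG hacyc hS⟩
        · -- left inverse
          rintro ⟨P, t⟩ hmem
          obtain ⟨hP, ht⟩ := Finset.mem_sigma.1 hmem
          rw [partsF, Finset.mem_filter] at hP
          obtain ⟨-, h1, h2, h3⟩ := hP
          dsimp only at h1 h2 h3
          have hst : ∀ (S : Finset V) (h : S ∈ P), IsSpanningTreeOn G S (t S h) := by
            intro S h
            have := Finset.mem_pi.1 ht S h
            rw [treesF, Finset.mem_filter] at this
            exact this.2
          have hPeq : Pof (unionF P t) = P := Pof_unionF h2 h3 hst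
          have hteq : ∀ (S : Finset V) (hS : S ∈ P), tof (unionF P t) S = t S hS :=
            fun S hS => tof_unionF h2 hst hS
          have key : ∀ (P' : Finset (Finset V))
              (t' : (S : Finset V) → S ∈ P' → Finset (Sym2 V)) (hq : P' = P),
              (∀ S (hS : S ∈ P'), t' S hS = t S (hq ▸ hS)) →
              (⟨P', t'⟩ : (Q : Finset (Finset V)) ×
                ((S : Finset V) → S ∈ Q → Finset (Sym2 V))) = ⟨P, t⟩ := by
            rintro P' t' rfl h
            exact congrArg (Sigma.mk P') (funext fun S => funext fun hS => h S hS)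
          exact key _ _ hPeq (fun S hS => hteq S _)
        · -- right inverse
          intro F hF
          rw [Finset.mem_filter] at hF
          exact unionF_tof hF.2.1
        · -- values agree
          rintro ⟨P, t⟩ hmem
          obtain ⟨hP, ht⟩ := Finset.mem_sigma.1 hmem
          rw [partsF, Finset.mem_filter] at hP
          obtain ⟨-, h1, h2, h3⟩ := hP
          dsimp only at h1 h2 h3
          have hst : ∀ (S : Finset V) (h : S ∈ P), IsSpanningTreeOn G S (t S h) := by
            intro S h
            have := Finset.mem_pi.1 ht S h
            rw [treesF, Finset.mem_filter] at this
            exact this.2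
          have hxp : Fintype.card V - P.card = (unionF P t).card := by
            have := unionF_card_add h2 h3 hst
            omega
          have hprod : (∏ S ∈ P.attach,
              (((1/2 + δ) ^ (-((S : Finset V).card : ℤ)) * (-1 : ℝ) ^ (t S.1 S.2).card
                * treeIntegral G ord δ S.1 (t S.1 S.2) : ℝ) : ℂ))
              = ∏ T ∈ comps (unionF P t), ((treeWeight G ord δ T : ℝ) : ℂ) := by
            rw [comps_unionF h2 h3 hst]
            rw [Finset.prod_image (by
              intro S hS S' hS' heq
              obtain ⟨e, he⟩ := (Finset.mem_filter.1 hS).2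
              have heq' : t S.1 S.2 = t S'.1 S'.2 := heq
              exact Subtype.ext (part_unique h2 hst he (heq' ▸ he)))]
            rw [← Finset.prod_filter_mul_prod_filter_not P.attach
              (fun S => (t S.1 S.2).Nonempty)]
            have hfirst : ∀ S ∈ P.attach.filter (fun S => (t S.1 S.2).Nonempty),
                (((1/2 + δ) ^ (-((S : Finset V).card : ℤ)) * (-1 : ℝ) ^ (t S.1 S.2).card
                  * treeIntegral G ord δ S.1 (t S.1 S.2) : ℝ) : ℂ)
                = ((treeWeight G ord δ (t S.1 S.2) : ℝ) : ℂ) := by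
              intro S hS
              have hne := (Finset.mem_filter.1 hS).2
              rw [treeWeight_eq ord δ (hst S.1 S.2) hne]
            have hsecond : ∀ S ∈ P.attach.filter (fun S => ¬(t S.1 S.2).Nonempty),
                (((1/2 + δ) ^ (-((S : Finset V).card : ℤ)) * (-1 : ℝ) ^ (t S.1 S.2).card
                  * treeIntegral G ord δ S.1 (t S.1 S.2) : ℝ) : ℂ) = 1 := by
              intro S hS
              have hemp : t S.1 S.2 = ∅ :=
                Finset.not_nonempty_iff_eq_empty.1 (Finset.mem_filter.1 hS).2
              have hstS := hst S.1 S.2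
              rw [hemp] at hstS ⊢
              have hcard := st_empty_card hstS
              exact_mod_cast singleton_weight ord hδ hcard
            rw [Finset.prod_congr rfl hfirst, Finset.prod_congr rfl hsecond,
              Finset.prod_const_one, mul_one]
          rw [hxp, hprod, mul_comm]

end VolumePaper
end

section
/- Let Δ > 0, let G be a finite simple graph of maximum degree at most Δ, and let v be a vertex of G. Then for every real a > 1, the rooted tree generating function satisfies T_{G,v}(log(a)/(aΔ)) ≤ a. -/
open MeasureTheory

attribute [local instance] Classical.propDecidable

namespace VolumePaper

variable {V : Type} [Fintype V]

section Aux
set_option linter.unusedSectionVars false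
set_option linter.unusedVariables false
set_option maxHeartbeats 1000000

lemma mem_verts {T : Finset (Sym2 V)} {v : V} : v ∈ verts T ↔ ∃ e ∈ T, v ∈ e := by
  simp [verts]

lemma verts_mono {T T' : Finset (Sym2 V)} (h : T ⊆ T') : verts T ⊆ verts T' := by
  intro v hv
  rcases mem_verts.1 hv with ⟨e, he, hve⟩
  exact mem_verts.2 ⟨e, h he, hve⟩

@[simp] lemma verts_empty : verts (∅ : Finset (Sym2 V)) = ∅ := by
  ext v; simp [mem_verts]

open SimpleGraph

lemma mem_verts_of_adj {F : Finset (Sym2 V)} {a b : V}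
    (h : (fromEdgeSet (↑F : Set (Sym2 V))).Adj a b) : a ∈ verts F := by
  rw [fromEdgeSet_adj] at h
  exact mem_verts.2 ⟨s(a, b), h.1, by simp⟩

/-- Counting lemma: a connected edge set has at most `|F|+1` endpoints. -/
lemma card_verts_le {F : Finset (Sym2 V)} (u0 : V)
    (hcon : ∀ w ∈ verts F, (fromEdgeSet (↑F : Set (Sym2 V))).Reachable u0 w) :
    (verts F).card ≤ F.card + 1 := by
  classical
  set H := fromEdgeSet (↑F : Set (Sym2 V)) with hH
  have key : ∀ w ∈ (verts F).erase u0, ∃ w', H.Adj w w' ∧ H.dist w' u0 < H.dist w u0 := by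
    intro w hw
    have hwne : w ≠ u0 := Finset.ne_of_mem_erase hw
    have hr : H.Reachable w u0 := (hcon w (Finset.mem_of_mem_erase hw)).symm
    obtain ⟨p, hp⟩ := hr.exists_walk_length_eq_dist
    have hpos : 0 < H.dist w u0 := hr.pos_dist_of_ne hwne
    cases p with
    | nil => exact absurd rfl hwne
    | cons hadj q =>
      refine ⟨_, hadj, ?_⟩
      have h1 : H.dist _ u0 ≤ q.length := dist_le q
      simp only [Walk.length_cons] at hp
      omega
  set g : V → Sym2 V := fun w =>
    if h : ∃ w', H.Adj w w' ∧ H.dist w' u0 < H.dist w u0 then s(w, h.choose) else s(w, w)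
    with hg
  have hmem : ∀ w ∈ (verts F).erase u0, g w ∈ F := by
    intro w hw
    obtain h := key w hw
    rw [hg]; simp only [h, dif_pos]
    have := h.choose_spec.1
    rw [fromEdgeSet_adj] at this
    exact this.1
  have hinj : Set.InjOn g ((verts F).erase u0 : Finset V) := by
    intro w1 h1 w2 h2 heq
    by_contra hne
    obtain k1 := key w1 h1
    obtain k2 := key w2 h2
    rw [hg] at heq
    simp only [k1, k2, dif_pos] at heq
    rw [Sym2.eq_iff] at heq
    rcases heq with ⟨h12, -⟩ | ⟨hA, hB⟩
    · exact hne h12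
    · have a1 := k1.choose_spec.2
      have a2 := k2.choose_spec.2
      rw [hB] at a1
      rw [← hA] at a2
      omega
  have := Finset.card_le_card_of_injOn g hmem hinj
  have h2 : (verts F).card ≤ ((verts F).erase u0).card + 1 := by
    by_cases hu : u0 ∈ verts F
    · rw [Finset.card_erase_of_mem hu]; omega
    · rw [Finset.erase_eq_of_notMem hu]; omega
  omega

/-- The working tree predicate. -/
def Tr (G : SimpleGraph V) (A : Finset V) (T : Finset (Sym2 V)) : Prop :=
  (↑T : Set (Sym2 V)) ⊆ G.edgeSet ∧ (∀ e ∈ T, ∀ z ∈ e, z ∈ A) ∧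
  (∀ a ∈ verts T, ∀ b ∈ verts T, (fromEdgeSet (↑T : Set (Sym2 V))).Reachable a b) ∧
  T.card + 1 = (verts T).card

lemma reach_sub {F F' : Finset (Sym2 V)} {u z : V}
    (p : (fromEdgeSet (↑F : Set (Sym2 V))).Walk u z) (h : ∀ e ∈ p.edges, e ∈ F') :
    (fromEdgeSet (↑F' : Set (Sym2 V))).Reachable u z := by
  refine ⟨p.transfer _ (fun e he => ?_)⟩
  rw [edgeSet_fromEdgeSet]
  refine ⟨h e he, ?_⟩
  have := p.edges_subset_edgeSet he
  rw [edgeSet_fromEdgeSet] at this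
  exact this.2

/-- Claim C: after deleting an edge `s(v,u)` of a connected edge set, every endpoint is still
reachable from `u` or from `v`. -/
lemma reach_del {T : Finset (Sym2 V)} {v u : V}
    (hcon : ∀ a ∈ verts T, ∀ b ∈ verts T,
      (fromEdgeSet (↑T : Set (Sym2 V))).Reachable a b)
    (he : s(v,u) ∈ T) :
    ∀ z ∈ verts T, (fromEdgeSet (↑(T.erase s(v,u)) : Set (Sym2 V))).Reachable u z ∨
      (fromEdgeSet (↑(T.erase s(v,u)) : Set (Sym2 V))).Reachable v z := by
  set R := fromEdgeSet (↑(T.erase s(v,u)) : Set (Sym2 V)) with hR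
  have step : ∀ {a b : V}, (fromEdgeSet (↑T : Set (Sym2 V))).Walk a b →
      (R.Reachable u a ∨ R.Reachable v a) → (R.Reachable u b ∨ R.Reachable v b) := by
    intro a b p
    induction p with
    | nil => exact id
    | @cons a c b hadj q ih =>
      intro hRa
      apply ih
      rw [fromEdgeSet_adj] at hadj
      by_cases hcase : s(a, c) = s(v, u)
      · rw [Sym2.eq_iff] at hcase
        rcases hcase with ⟨rfl, rfl⟩ | ⟨rfl, rfl⟩
        · exact Or.inl (Reachable.refl _)
        · exact Or.inr (Reachable.refl _)
      · have hadj' : R.Adj a c := by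
          rw [hR, fromEdgeSet_adj]
          exact ⟨Finset.mem_coe.2 (Finset.mem_erase.2 ⟨hcase, hadj.1⟩), hadj.2⟩
        rcases hRa with h | h
        · exact Or.inl (h.trans hadj'.reachable)
        · exact Or.inr (h.trans hadj'.reachable)
  intro z hz
  have hv : v ∈ verts T := mem_verts.2 ⟨s(v,u), he, by simp⟩
  obtain ⟨p⟩ := hcon v hv z hz
  exact step p (Or.inr (Reachable.refl _))

/-- The component of `u` in `T.erase e`, as a set of edges. -/
noncomputable def comp2 (T : Finset (Sym2 V)) (e : Sym2 V) (u : V) : Finset (Sym2 V) :=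
  (T.erase e).filter (fun e' => ∀ z ∈ e',
    (fromEdgeSet (↑(T.erase e) : Set (Sym2 V))).Reachable u z)

lemma comp2_subset {T : Finset (Sym2 V)} {e : Sym2 V} {u : V} :
    comp2 T e u ⊆ T.erase e := Finset.filter_subset _ _

lemma reach_of_mem_verts_comp2 {T : Finset (Sym2 V)} {e : Sym2 V} {u z : V}
    (hz : z ∈ verts (comp2 T e u)) :
    (fromEdgeSet (↑(T.erase e) : Set (Sym2 V))).Reachable u z := by
  rcases mem_verts.1 hz with ⟨e', he', hze'⟩
  exact (Finset.mem_filter.1 he').2 z hze'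

lemma mem_verts_comp2_of_nonempty {T : Finset (Sym2 V)} {e : Sym2 V} {u : V}
    (h : (comp2 T e u).Nonempty) : u ∈ verts (comp2 T e u) := by
  classical
  obtain ⟨e', he'⟩ := h
  obtain ⟨a, b, rfl⟩ : ∃ x y, e' = s(x, y) := Sym2.exists.mp ⟨e', rfl⟩
  have ha : (fromEdgeSet (↑(T.erase e) : Set (Sym2 V))).Reachable u a :=
    (Finset.mem_filter.1 he').2 a (by simp)
  obtain ⟨p⟩ := ha
  cases p with
  | nil => exact mem_verts.2 ⟨s(u, b), he', by simp⟩
  | @cons _ c _ hadj q =>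
    have hmem : s(u, c) ∈ comp2 T e u := by
      rw [fromEdgeSet_adj] at hadj
      refine Finset.mem_filter.2 ⟨hadj.1, ?_⟩
      intro z hz
      rw [Sym2.mem_iff] at hz
      rcases hz with rfl | rfl
      · exact Reachable.refl _
      · exact ⟨(Walk.cons (by rw [fromEdgeSet_adj]; exact hadj) Walk.nil : _)⟩
    exact mem_verts.2 ⟨s(u, c), hmem, by simp⟩

/-- Each component of the deletion is connected from its base point. -/
lemma comp2_conn {T : Finset (Sym2 V)} {e : Sym2 V} {u0 : V} :
    ∀ w ∈ verts (comp2 T e u0),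
      (fromEdgeSet (↑(comp2 T e u0) : Set (Sym2 V))).Reachable u0 w := by
  intro w hw
  obtain ⟨p⟩ := reach_of_mem_verts_comp2 hw
  refine reach_sub p (fun e'' he'' => ?_)
  have heT : e'' ∈ T.erase e := by
    have := p.edges_subset_edgeSet he''
    rw [edgeSet_fromEdgeSet] at this
    exact Finset.mem_coe.1 this.1
  refine Finset.mem_filter.2 ⟨heT, fun z hz => ?_⟩
  obtain ⟨a, b, rfl⟩ : ∃ x y, e'' = s(x, y) := Sym2.exists.mp ⟨e'', rfl⟩
  rw [Sym2.mem_iff] at hz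
  have hs : z ∈ p.support := by
    rcases hz with rfl | rfl
    · exact p.fst_mem_support_of_mem_edges he''
    · exact p.snd_mem_support_of_mem_edges he''
  exact ⟨p.takeUntil z hs⟩

/-- The main decomposition of a tree along one of its edges. -/
lemma decomp {G : SimpleGraph V} {A : Finset V} {T : Finset (Sym2 V)} {v u : V}
    (hT : Tr G A T) (he : s(v, u) ∈ T) :
    T = insert s(v,u) (comp2 T s(v,u) u ∪ comp2 T s(v,u) v) ∧
    T.card = (comp2 T s(v,u) u).card + (comp2 T s(v,u) v).card + 1 ∧
    (comp2 T s(v,u) u = ∅ ∨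
      (Tr G (A.erase v) (comp2 T s(v,u) u) ∧ u ∈ verts (comp2 T s(v,u) u))) ∧
    (comp2 T s(v,u) v = ∅ ∨
      (Tr G (A.erase u) (comp2 T s(v,u) v) ∧ v ∈ verts (comp2 T s(v,u) v))) := by
  classical
  obtain ⟨hGE, hA, hcon, hcard⟩ := hT
  set R := fromEdgeSet (↑(T.erase s(v,u)) : Set (Sym2 V)) with hR
  set Tu := comp2 T s(v,u) u with hTu_def
  set Tv := comp2 T s(v,u) v with hTv_def
  have hvu_ne : v ≠ u := by
    have := G.not_isDiag_of_mem_edgeSet (hGE he)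
    simpa [Sym2.mk_isDiag_iff] using this
  have hv : v ∈ verts T := mem_verts.2 ⟨s(v,u), he, by simp⟩
  have hu : u ∈ verts T := mem_verts.2 ⟨s(v,u), he, by simp⟩
  have claimC := reach_del hcon he
  have not_uv : ¬ R.Reachable u v := by
    intro h
    have huv' : u ∈ verts (T.erase s(v,u)) ∧ v ∈ verts (T.erase s(v,u)) := by
      constructor
      · obtain ⟨p⟩ := h
        cases p with
        | nil => exact absurd rfl hvu_ne.symm
        | cons hadj q => exact mem_verts_of_adj hadj
      · obtain ⟨p'⟩ := h.symm
        cases p' with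
        | nil => exact absurd rfl hvu_ne
        | cons hadj' q' => exact mem_verts_of_adj hadj'
    have hall : ∀ w ∈ verts (T.erase s(v,u)), R.Reachable u w := by
      intro w hw
      have hwT : w ∈ verts T := verts_mono (Finset.erase_subset _ _) hw
      rcases claimC w hwT with h1 | h1
      · exact h1
      · exact h.trans h1
    have hb := card_verts_le u hall
    have hsub : verts T ⊆ verts (T.erase s(v,u)) := by
      intro z hz
      rcases mem_verts.1 hz with ⟨e'', he'', hz''⟩
      by_cases hc : e'' = s(v,u)
      · subst hc
        rw [Sym2.mem_iff] at hz''
        rcases hz'' with rfl | rfl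
        · exact huv'.2
        · exact huv'.1
      · exact mem_verts.2 ⟨e'', Finset.mem_erase.2 ⟨hc, he''⟩, hz''⟩
    have h3 := Finset.card_le_card hsub
    have hce := Finset.card_erase_of_mem he
    have hpos : 0 < T.card := Finset.card_pos.2 ⟨_, he⟩
    omega
  have hdisj_reach : ∀ z, R.Reachable u z → R.Reachable v z → False :=
    fun z h1 h2 => not_uv (h1.trans h2.symm)
  have hclass : ∀ e' ∈ T.erase s(v,u), e' ∈ Tu ∨ e' ∈ Tv := by
    intro e' he'
    obtain ⟨a, b, rfl⟩ : ∃ x y, e' = s(x, y) := Sym2.exists.mp ⟨e', rfl⟩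
    have haT : a ∈ verts T := mem_verts.2 ⟨s(a,b), Finset.mem_of_mem_erase he', by simp⟩
    have hab : a ≠ b := by
      have := G.not_isDiag_of_mem_edgeSet (hGE (Finset.mem_of_mem_erase he'))
      simpa [Sym2.mk_isDiag_iff] using this
    have hadj : R.Adj a b := by
      rw [hR, fromEdgeSet_adj]
      exact ⟨Finset.mem_coe.2 he', hab⟩
    have hmemt : ∀ (w : V), R.Reachable w a → ∀ z ∈ s(a,b), R.Reachable w z := by
      intro w hwa z hz
      rw [Sym2.mem_iff] at hz
      rcases hz with rfl | rfl
      · exact hwa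
      · exact hwa.trans hadj.reachable
    rcases claimC a haT with h1 | h1
    · exact Or.inl (Finset.mem_filter.2 ⟨he', hmemt u h1⟩)
    · exact Or.inr (Finset.mem_filter.2 ⟨he', hmemt v h1⟩)
  have hunion : Tu ∪ Tv = T.erase s(v,u) := by
    apply Finset.Subset.antisymm
    · intro e' he'
      rcases Finset.mem_union.1 he' with h | h
      · exact comp2_subset h
      · exact comp2_subset h
    · intro e' he'
      rcases hclass e' he' with h | h
      · exact Finset.mem_union_left _ h
      · exact Finset.mem_union_right _ h
  have hdisjT : Disjoint Tu Tv := by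
    rw [Finset.disjoint_left]
    intro e' h1 h2
    obtain ⟨a, b, rfl⟩ : ∃ x y, e' = s(x, y) := Sym2.exists.mp ⟨e', rfl⟩
    exact hdisj_reach a ((Finset.mem_filter.1 h1).2 a (by simp))
      ((Finset.mem_filter.1 h2).2 a (by simp))
  have hrecon : T = insert s(v,u) (Tu ∪ Tv) := by
    rw [hunion, Finset.insert_erase he]
  have hcard2 : T.card = Tu.card + Tv.card + 1 := by
    have h1 := Finset.card_union_of_disjoint hdisjT
    rw [hunion] at h1
    have h2 := Finset.card_erase_of_mem he
    have hpos : 0 < T.card := Finset.card_pos.2 ⟨_, he⟩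
    omega
  -- cardinality bounds on the vertex sets of the pieces
  have hboundu : (verts Tu ∪ {u}).card ≤ Tu.card + 1 := by
    by_cases hTu : Tu = ∅
    · rw [hTu]; simp
    · have humem : u ∈ verts Tu :=
        mem_verts_comp2_of_nonempty (Finset.nonempty_iff_ne_empty.2 hTu)
      rw [Finset.union_eq_left.2 (by simpa using humem)]
      exact card_verts_le u comp2_conn
  have hboundv : (verts Tv ∪ {v}).card ≤ Tv.card + 1 := by
    by_cases hTv : Tv = ∅
    · rw [hTv]; simp
    · have hvmem : v ∈ verts Tv :=
        mem_verts_comp2_of_nonempty (Finset.nonempty_iff_ne_empty.2 hTv)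
      rw [Finset.union_eq_left.2 (by simpa using hvmem)]
      exact card_verts_le v comp2_conn
  have hTuT : Tu ⊆ T := comp2_subset.trans (Finset.erase_subset _ _)
  have hTvT : Tv ⊆ T := comp2_subset.trans (Finset.erase_subset _ _)
  have hvertsT : verts T = (verts Tu ∪ {u}) ∪ (verts Tv ∪ {v}) := by
    apply Finset.Subset.antisymm
    · intro z hz
      rcases mem_verts.1 hz with ⟨e'', he'', hz''⟩
      by_cases hc : e'' = s(v,u)
      · subst hc
        rw [Sym2.mem_iff] at hz''
        rcases hz'' with rfl | rfl
        · exact Finset.mem_union_right _ (Finset.mem_union_right _ (by simp))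
        · exact Finset.mem_union_left _ (Finset.mem_union_right _ (by simp))
      · rcases hclass e'' (Finset.mem_erase.2 ⟨hc, he''⟩) with h | h
        · exact Finset.mem_union_left _ (Finset.mem_union_left _ (mem_verts.2 ⟨e'', h, hz''⟩))
        · exact Finset.mem_union_right _ (Finset.mem_union_left _ (mem_verts.2 ⟨e'', h, hz''⟩))
    · intro z hz
      rcases Finset.mem_union.1 hz with h | h <;> rcases Finset.mem_union.1 h with h1 | h1
      · exact verts_mono hTuT h1
      · simp only [Finset.mem_singleton] at h1; subst h1; exact hu
      · exact verts_mono hTvT h1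
      · simp only [Finset.mem_singleton] at h1; subst h1; exact hv
  have hdisjV : Disjoint (verts Tu ∪ {u}) (verts Tv ∪ {v}) := by
    rw [Finset.disjoint_left]
    intro z h1 h2
    have r1 : R.Reachable u z := by
      rcases Finset.mem_union.1 h1 with h | h
      · exact reach_of_mem_verts_comp2 h
      · simp only [Finset.mem_singleton] at h; subst h; exact Reachable.refl _
    have r2 : R.Reachable v z := by
      rcases Finset.mem_union.1 h2 with h | h
      · exact reach_of_mem_verts_comp2 h
      · simp only [Finset.mem_singleton] at h; subst h; exact Reachable.refl _
    exact hdisj_reach z r1 r2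
  have hcardV : (verts T).card = (verts Tu ∪ {u}).card + (verts Tv ∪ {v}).card := by
    rw [hvertsT]
    exact Finset.card_union_of_disjoint hdisjV
  have hequ : (verts Tu ∪ {u}).card = Tu.card + 1 := by omega
  have heqv : (verts Tv ∪ {v}).card = Tv.card + 1 := by omega
  refine ⟨hrecon, hcard2, ?_, ?_⟩
  · by_cases hTu : Tu = ∅
    · exact Or.inl hTu
    · have humem : u ∈ verts Tu :=
        mem_verts_comp2_of_nonempty (Finset.nonempty_iff_ne_empty.2 hTu)
      have hVu_eq : verts Tu ∪ {u} = verts Tu := Finset.union_eq_left.2 (by simpa using humem)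
      refine Or.inr ⟨⟨?_, ?_, ?_, ?_⟩, humem⟩
      · intro e' he'
        exact hGE (hTuT (Finset.mem_coe.1 he'))
      · intro e' he' z hz
        refine Finset.mem_erase.2 ⟨?_, hA e' (hTuT he') z hz⟩
        intro hzv
        have hrz : R.Reachable u z := reach_of_mem_verts_comp2 (mem_verts.2 ⟨e', he', hz⟩)
        rw [hzv] at hrz
        exact not_uv hrz
      · intro a ha b hb
        exact (comp2_conn a ha).symm.trans (comp2_conn b hb)
      · rw [← hVu_eq]; omega
  · by_cases hTv : Tv = ∅
    · exact Or.inl hTv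
    · have hvmem : v ∈ verts Tv :=
        mem_verts_comp2_of_nonempty (Finset.nonempty_iff_ne_empty.2 hTv)
      have hVv_eq : verts Tv ∪ {v} = verts Tv := Finset.union_eq_left.2 (by simpa using hvmem)
      refine Or.inr ⟨⟨?_, ?_, ?_, ?_⟩, hvmem⟩
      · intro e' he'
        exact hGE (hTvT (Finset.mem_coe.1 he'))
      · intro e' he' z hz
        refine Finset.mem_erase.2 ⟨?_, hA e' (hTvT he') z hz⟩
        intro hzu
        have hrz : R.Reachable v z := reach_of_mem_verts_comp2 (mem_verts.2 ⟨e', he', hz⟩)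
        rw [hzu] at hrz
        exact not_uv hrz.symm
      · intro a ha b hb
        exact (comp2_conn a ha).symm.trans (comp2_conn b hb)
      · rw [← hVv_eq]; omega

lemma tr_of_isTreeSet {G : SimpleGraph V} {T : Finset (Sym2 V)}
    (hsub : (↑T : Set (Sym2 V)) ⊆ G.edgeSet) (hTree : IsTreeSet T) :
    Tr G Finset.univ T := by
  classical
  set H := fromEdgeSet (↑T : Set (Sym2 V)) with hH
  set I := SimpleGraph.induce (↑(verts T) : Set V) H with hI
  have hconn : I.Connected := hTree.isConnected
  refine ⟨hsub, fun e he z hz => Finset.mem_univ z, ?_, ?_⟩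
  · intro a ha b hb
    have h := hconn.preconnected ⟨a, by simpa using ha⟩ ⟨b, by simpa using hb⟩
    have := h.map (SimpleGraph.Embedding.induce (↑(verts T) : Set V) (G := H)).toHom
    simpa using this
  · haveI : Fintype ↥(I.edgeSet) := Fintype.ofFinite _
    have hcard := hTree.card_edgeFinset
    have hV : Fintype.card ↥(↑(verts T) : Set V) = (verts T).card := by
      simp
    have hE : I.edgeFinset.card = T.card := by
      have hinj : Function.Injective (Sym2.map (Subtype.val :
          ↥(↑(verts T) : Set V) → V)) := Sym2.map.injective Subtype.val_injective
      have himg : I.edgeFinset.image (Sym2.map Subtype.val) = T := by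
        apply Finset.Subset.antisymm
        · intro e he
          rcases Finset.mem_image.1 he with ⟨e', he', rfl⟩
          obtain ⟨x, y, rfl⟩ : ∃ x y, e' = s(x, y) := Sym2.exists.mp ⟨e', rfl⟩
          rw [SimpleGraph.mem_edgeFinset, SimpleGraph.mem_edgeSet] at he'
          have : H.Adj ↑x ↑y := he'
          rw [hH, fromEdgeSet_adj] at this
          simpa using this.1
        · intro e he
          obtain ⟨x, y, rfl⟩ : ∃ a b, e = s(a, b) := Sym2.exists.mp ⟨e, rfl⟩
          have hx : x ∈ verts T := mem_verts.2 ⟨s(x,y), he, by simp⟩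
          have hy : y ∈ verts T := mem_verts.2 ⟨s(x,y), he, by simp⟩
          have hxy : x ≠ y := by
            have := G.not_isDiag_of_mem_edgeSet (hsub he)
            simpa [Sym2.mk_isDiag_iff] using this
          have hadj : I.Adj ⟨x, by simpa using hx⟩ ⟨y, by simpa using hy⟩ := by
            show H.Adj x y
            rw [hH, fromEdgeSet_adj]
            exact ⟨he, hxy⟩
          refine Finset.mem_image.2 ⟨s(⟨x, by simpa using hx⟩, ⟨y, by simpa using hy⟩), ?_, rfl⟩
          rw [SimpleGraph.mem_edgeFinset, SimpleGraph.mem_edgeSet]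
          exact hadj
      calc I.edgeFinset.card = (I.edgeFinset.image (Sym2.map Subtype.val)).card :=
            (Finset.card_image_of_injective _ hinj).symm
        _ = T.card := by rw [himg]
    rw [hV] at hcard
    rw [← hE]
    exact hcard

/-- The index set of trees in `G` with endpoints in `A`, containing `v`, whose edges at `v`
go into `B` (together with the empty set). -/
noncomputable def idx (G : SimpleGraph V) (A : Finset V) (v : V) (B : Finset V) :
    Finset (Finset (Sym2 V)) :=
  Finset.univ.filter (fun T => T = ∅ ∨
    (Tr G A T ∧ v ∈ verts T ∧ ∀ u : V, s(v,u) ∈ T → u ∈ B))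

lemma idx_eq_singleton {G : SimpleGraph V} {A : Finset V} {v : V} {B : Finset V}
    (h : v ∉ A ∨ B = ∅) : idx G A v B = {∅} := by
  classical
  ext T
  simp only [idx, Finset.mem_filter, Finset.mem_univ, true_and, Finset.mem_singleton]
  constructor
  · rintro (rfl | ⟨hTr, hv, hB⟩)
    · rfl
    · exfalso
      rcases mem_verts.1 hv with ⟨e, he, hve⟩
      obtain ⟨w, rfl⟩ := Sym2.mem_iff_exists.1 hve
      rcases h with h | rfl
      · exact h (hTr.2.1 _ he v (by simp))
      · exact absurd (hB w he) (Finset.notMem_empty w)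
  · rintro rfl
    exact Or.inl rfl

/-- The partial tree generating sum. -/
noncomputable def Ssum (G : SimpleGraph V) (A : Finset V) (v : V) (B : Finset V) (x : ℝ) : ℝ :=
  ∑ T ∈ idx G A v B, x ^ T.card

lemma Ssum_nonneg {G : SimpleGraph V} {A : Finset V} {v : V} {B : Finset V} {x : ℝ}
    (hx : 0 ≤ x) : 0 ≤ Ssum G A v B x :=
  Finset.sum_nonneg (fun T _ => pow_nonneg hx _)

lemma Ssum_singleton {G : SimpleGraph V} {A : Finset V} {v : V} {B : Finset V} {x : ℝ}
    (h : v ∉ A ∨ B = ∅) : Ssum G A v B x = 1 := by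
  rw [Ssum, idx_eq_singleton h]
  simp

/-- The main induction. -/
lemma main_ind (G : SimpleGraph V) (x a : ℝ) (hx : 0 ≤ x) (ha : 1 ≤ a)
    (Hd : ∀ w : V, (1 + x * a) ^ (Finset.univ.filter (fun z => G.Adj w z)).card ≤ a) :
    ∀ n : ℕ, ∀ A : Finset V, A.card ≤ n → ∀ (v : V) (B : Finset V),
      Ssum G A v B x ≤ (1 + x * a) ^ B.card := by
  classical
  have hbase : (1:ℝ) ≤ 1 + x * a := by nlinarith
  intro n
  induction n with
  | zero =>
    intro A hA v B
    have : A = ∅ := Finset.card_eq_zero.1 (Nat.le_zero.1 hA)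
    rw [Ssum_singleton (Or.inl (by simp [this]))]
    exact one_le_pow₀ hbase
  | succ n ih =>
    intro A hA v B
    by_cases hvA : v ∈ A
    swap
    · rw [Ssum_singleton (Or.inl hvA)]
      exact one_le_pow₀ hbase
    induction B using Finset.induction_on with
    | empty =>
      rw [Ssum_singleton (Or.inr rfl)]
      simp
    | @insert u B' hu ihB =>
      set e : Sym2 V := s(v, u) with he_def
      set sAll := idx G A v (insert u B') with hsAll
      have hsplit := Finset.sum_filter_add_sum_filter_not sAll (fun T => e ∈ T)
        (fun T => x ^ T.card)
      -- the part without the edge e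
      have hno : sAll.filter (fun T => e ∉ T) ⊆ idx G A v B' := by
        intro T hT
        rw [Finset.mem_filter] at hT
        obtain ⟨hT1, hT2⟩ := hT
        rw [hsAll, idx, Finset.mem_filter] at hT1
        rcases hT1.2 with rfl | ⟨hTr, hv, hB⟩
        · simp [idx]
        · refine Finset.mem_filter.2 ⟨Finset.mem_univ _, Or.inr ⟨hTr, hv, fun w hw => ?_⟩⟩
          have := hB w hw
          rcases Finset.mem_insert.1 this with rfl | h
          · exact absurd hw hT2
          · exact h
      have hnosum : ∑ T ∈ sAll.filter (fun T => e ∉ T), x ^ T.card ≤ (1 + x * a) ^ B'.card :=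
        le_trans (Finset.sum_le_sum_of_subset_of_nonneg hno
          (fun T _ _ => pow_nonneg hx _)) (ihB)
      -- the part with the edge e
      have hyessum : ∑ T ∈ sAll.filter (fun T => e ∈ T), x ^ T.card ≤
          x * a * (1 + x * a) ^ B'.card := by
        by_cases huA : u ∈ A
        swap
        · have : sAll.filter (fun T => e ∈ T) = ∅ := by
            rw [Finset.filter_eq_empty_iff]
            intro T hT hTe
            rw [hsAll, idx, Finset.mem_filter] at hT
            rcases hT.2 with rfl | ⟨hTr, hv, hB⟩
            · exact absurd hTe (Finset.notMem_empty e)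
            · exact huA (hTr.2.1 e hTe u (by simp [he_def]))
          rw [this]
          simp only [Finset.sum_empty]
          positivity
        -- nonempty case: use the decomposition
        set Nu := Finset.univ.filter (fun z => G.Adj u z) with hNu
        set Pu := idx G (A.erase v) u Nu with hPu
        set Pv := idx G (A.erase u) v B' with hPv
        have hmaps : ∀ T ∈ sAll.filter (fun T => e ∈ T),
            (comp2 T e u, comp2 T e v) ∈ Pu ×ˢ Pv ∧
            T = insert e (comp2 T e u ∪ comp2 T e v) ∧
            T.card = (comp2 T e u).card + (comp2 T e v).card + 1 := by
          intro T hT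
          rw [Finset.mem_filter] at hT
          obtain ⟨hT1, hTe⟩ := hT
          rw [hsAll, idx, Finset.mem_filter] at hT1
          rcases hT1.2 with rfl | ⟨hTr, hv, hB⟩
          · exact absurd hTe (Finset.notMem_empty e)
          obtain ⟨hrecon, hcard2, hcu, hcv⟩ := decomp hTr hTe
          refine ⟨Finset.mem_product.2 ⟨?_, ?_⟩, hrecon, hcard2⟩
          · rw [hPu, idx, Finset.mem_filter]
            refine ⟨Finset.mem_univ _, ?_⟩
            rcases hcu with h0 | ⟨hTru, humem⟩
            · exact Or.inl h0
            · refine Or.inr ⟨hTru, humem, fun w hw => ?_⟩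
              rw [hNu, Finset.mem_filter]
              refine ⟨Finset.mem_univ _, ?_⟩
              have : s(u, w) ∈ T := comp2_subset.trans (Finset.erase_subset _ _) hw
              exact (SimpleGraph.mem_edgeSet G).1 (hTr.1 this)
          · rw [hPv, idx, Finset.mem_filter]
            refine ⟨Finset.mem_univ _, ?_⟩
            rcases hcv with h0 | ⟨hTrv, hvmem⟩
            · exact Or.inl h0
            · refine Or.inr ⟨hTrv, hvmem, fun w hw => ?_⟩
              have hwT : s(v, w) ∈ T.erase e := comp2_subset hw
              have h1 : s(v, w) ∈ T := Finset.mem_of_mem_erase hwT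
              have h2 : s(v, w) ≠ e := Finset.ne_of_mem_erase hwT
              have h3 := hB w h1
              rcases Finset.mem_insert.1 h3 with rfl | h4
              · exact absurd rfl h2
              · exact h4
        have hinj : Set.InjOn (fun T => (comp2 T e u, comp2 T e v))
            ↑(sAll.filter (fun T => e ∈ T)) := by
          intro T1 h1 T2 h2 heq
          have r1 := (hmaps T1 h1).2.1
          have r2 := (hmaps T2 h2).2.1
          simp only [Prod.mk.injEq] at heq
          rw [r1, r2, heq.1, heq.2]
        calc ∑ T ∈ sAll.filter (fun T => e ∈ T), x ^ T.card
            = ∑ T ∈ sAll.filter (fun T => e ∈ T),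
              x * (x ^ (comp2 T e u).card * x ^ (comp2 T e v).card) := by
              apply Finset.sum_congr rfl
              intro T hT
              rw [(hmaps T hT).2.2]
              ring
          _ = ∑ p ∈ (sAll.filter (fun T => e ∈ T)).image
                (fun T => (comp2 T e u, comp2 T e v)),
              x * (x ^ p.1.card * x ^ p.2.card) := by
              rw [Finset.sum_image (fun T h1 T' h2 heq => hinj h1 h2 heq)]
          _ ≤ ∑ p ∈ Pu ×ˢ Pv, x * (x ^ p.1.card * x ^ p.2.card) := by
              apply Finset.sum_le_sum_of_subset_of_nonneg
              · intro p hp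
                rcases Finset.mem_image.1 hp with ⟨T, hT, rfl⟩
                exact (hmaps T hT).1
              · intro p _ _
                positivity
          _ = x * (Ssum G (A.erase v) u Nu x * Ssum G (A.erase u) v B' x) := by
              rw [← Finset.mul_sum, Finset.sum_product, Ssum, Ssum, Finset.sum_mul_sum]
          _ ≤ x * (a * (1 + x * a) ^ B'.card) := by
              apply mul_le_mul_of_nonneg_left _ hx
              apply mul_le_mul
              · have h1 : (A.erase v).card ≤ n := by
                  rw [Finset.card_erase_of_mem hvA]
                  omega
                exact le_trans (ih (A.erase v) h1 u Nu) (Hd u)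
              · have h2 : (A.erase u).card ≤ n := by
                  rw [Finset.card_erase_of_mem huA]
                  omega
                exact ih (A.erase u) h2 v B'
              · exact Ssum_nonneg hx
              · linarith
          _ = x * a * (1 + x * a) ^ B'.card := by ring
      have hcardB : (insert u B').card = B'.card + 1 := Finset.card_insert_of_notMem hu
      calc Ssum G A v (insert u B') x
          = ∑ T ∈ sAll.filter (fun T => e ∈ T), x ^ T.card +
            ∑ T ∈ sAll.filter (fun T => e ∉ T), x ^ T.card := by
            rw [Ssum, ← hsplit]
        _ ≤ x * a * (1 + x * a) ^ B'.card + (1 + x * a) ^ B'.card := by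
            exact add_le_add hyessum hnosum
        _ = (1 + x * a) ^ (B'.card + 1) := by ring
        _ = (1 + x * a) ^ (insert u B').card := by rw [hcardB]

end Aux

/-- For a graph `G` of maximum degree at most `Δ > 0`, a vertex `v`
and a real `a > 1`, the rooted tree generating function satisfies
`T_{G,v}(log a / (aΔ)) ≤ a` (the sum being over all edge sets `T ⊆ E(G)` forming a
tree whose vertex set contains `v`, including the empty edge set). -/
theorem statement8 (Δ : ℝ) (hΔ : 0 < Δ) (V : Type) [Fintype V] (G : SimpleGraph V)
    (hdeg : maxDegreeLE G Δ) (v : V) (a : ℝ) (ha : 1 < a) :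
    ∑ T ∈ Finset.univ.filter (fun T : Finset (Sym2 V) =>
        (↑T : Set (Sym2 V)) ⊆ G.edgeSet ∧ (T = ∅ ∨ (IsTreeSet T ∧ v ∈ verts T))),
      (Real.log a / (a * Δ)) ^ T.card ≤ a := by
  classical
  set x := Real.log a / (a * Δ) with hxdef
  have ha0 : 0 < a := lt_trans one_pos ha
  have hlog : 0 ≤ Real.log a := Real.log_nonneg (le_of_lt ha)
  have hx : 0 ≤ x := div_nonneg hlog (by positivity)
  have hxa : x * a = Real.log a / Δ := by
    rw [hxdef]
    field_simp
  have hxa0 : 0 ≤ x * a := mul_nonneg hx ha0.le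
  have Hd : ∀ w : V, (1 + x * a) ^ (Finset.univ.filter (fun z => G.Adj w z)).card ≤ a := by
    intro w
    set d := (Finset.univ.filter (fun z => G.Adj w z)).card with hd_def
    have hd : (d : ℝ) ≤ Δ := hdeg w
    have h1 : (1 + x * a) ≤ Real.exp (x * a) := by
      have := Real.add_one_le_exp (x * a)
      linarith
    have h2 : (1 + x * a) ^ d ≤ Real.exp (x * a) ^ d :=
      pow_le_pow_left₀ (by linarith) h1 d
    have h3 : Real.exp (x * a) ^ d = Real.exp ((d : ℝ) * (x * a)) :=
      (Real.exp_nat_mul _ d).symm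
    have h4 : (d : ℝ) * (x * a) ≤ Δ * (x * a) := mul_le_mul_of_nonneg_right hd hxa0
    have h5 : Δ * (x * a) = Real.log a := by
      rw [hxa]
      field_simp
    calc (1 + x * a) ^ d ≤ Real.exp (x * a) ^ d := h2
      _ = Real.exp ((d : ℝ) * (x * a)) := h3
      _ ≤ Real.exp (Δ * (x * a)) := Real.exp_le_exp.2 h4
      _ = a := by rw [h5, Real.exp_log ha0]
  have hsub : Finset.univ.filter (fun T : Finset (Sym2 V) =>
        (↑T : Set (Sym2 V)) ⊆ G.edgeSet ∧ (T = ∅ ∨ (IsTreeSet T ∧ v ∈ verts T))) ⊆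
      idx G Finset.univ v (Finset.univ.filter (fun z => G.Adj v z)) := by
    intro T hT
    rw [Finset.mem_filter] at hT
    obtain ⟨-, hTE, hT2⟩ := hT
    refine Finset.mem_filter.2 ⟨Finset.mem_univ _, ?_⟩
    rcases hT2 with rfl | ⟨htree, hv⟩
    · exact Or.inl rfl
    · refine Or.inr ⟨tr_of_isTreeSet hTE htree, hv, fun w hw => ?_⟩
      simp only [Finset.mem_filter, Finset.mem_univ, true_and]
      exact (SimpleGraph.mem_edgeSet G).1 (hTE hw)
  calc ∑ T ∈ Finset.univ.filter (fun T : Finset (Sym2 V) =>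
        (↑T : Set (Sym2 V)) ⊆ G.edgeSet ∧ (T = ∅ ∨ (IsTreeSet T ∧ v ∈ verts T))),
      x ^ T.card
      ≤ Ssum G Finset.univ v (Finset.univ.filter (fun z => G.Adj v z)) x :=
        Finset.sum_le_sum_of_subset_of_nonneg hsub (fun _ _ _ => pow_nonneg hx _)
    _ ≤ (1 + x * a) ^ (Finset.univ.filter (fun z => G.Adj v z)).card :=
        main_ind G x a hx ha.le Hd (Fintype.card V) Finset.univ
          (le_of_eq Finset.card_univ) v _
    _ ≤ a := Hd v


end VolumePaper
end

section
/- Let G=(V,E) be a finite simple graph with a fixed total order on E and let δ ∈ (0,1/2). For every subset T ⊆ E forming a tree with at least one edge, the weight satisfies |w_T| ≤ (2δ/(1/2+δ))^{|V(T)|}. -/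
open MeasureTheory

attribute [local instance] Classical.propDecidable

namespace VolumePaper

variable {V : Type} [Fintype V]

/-- For every edge set `T ⊆ E(G)` forming a tree (with at least one
edge), `|w_T| ≤ (2δ/(1/2+δ))^{|V(T)|}`. -/
theorem statement9 (V : Type) [Fintype V] (G : SimpleGraph V) (ord : Sym2 V → ℕ)
    (hord : Function.Injective ord) (δ : ℝ) (hδ : δ ∈ Set.Ioo (0:ℝ) (1/2))
    (T : Finset (Sym2 V)) (hTE : (↑T : Set (Sym2 V)) ⊆ G.edgeSet) (hT : IsTreeSet T) :
    |treeWeight G ord δ T| ≤ (2 * δ / (1/2 + δ)) ^ (verts T).card := by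
  obtain ⟨hδ0, hδ2⟩ := hδ
  have hpos : (0:ℝ) < 1/2 + δ := by linarith
  set S := verts T with hS
  set f : ({v // v ∈ S} → ℝ) → ℝ := fun x =>
    (∏ e ∈ T, indGt (extFun S x) e) * ∏ e ∈ brokenEdgesOn G ord S T, indLe (extFun S x) e
    with hf
  set B : Set ({v // v ∈ S} → ℝ) := Set.univ.pi (fun _ => Set.Icc (0:ℝ) (1/2 + δ)) with hB
  set C : Set ({v // v ∈ S} → ℝ) := Set.univ.pi (fun _ => Set.Ioc (1/2 - δ) (1/2 + δ)) with hC
  -- indicator values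
  have hGt01 : ∀ (y : V → ℝ) e, indGt y e = 0 ∨ indGt y e = 1 := by
    intro y e
    induction e using Sym2.ind with
    | _ a b => simp only [indGt, Sym2.lift_mk]; split <;> simp
  have hLe01 : ∀ (y : V → ℝ) e, indLe y e = 0 ∨ indLe y e = 1 := by
    intro y e
    induction e using Sym2.ind with
    | _ a b => simp only [indLe, Sym2.lift_mk]; split <;> simp
  have hGt0 : ∀ (y : V → ℝ) e, 0 ≤ indGt y e := by
    intro y e; rcases hGt01 y e with h | h <;> rw [h] <;> norm_num
  have hGt1 : ∀ (y : V → ℝ) e, indGt y e ≤ 1 := by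
    intro y e; rcases hGt01 y e with h | h <;> rw [h] <;> norm_num
  have hLe0 : ∀ (y : V → ℝ) e, 0 ≤ indLe y e := by
    intro y e; rcases hLe01 y e with h | h <;> rw [h] <;> norm_num
  have hLe1 : ∀ (y : V → ℝ) e, indLe y e ≤ 1 := by
    intro y e; rcases hLe01 y e with h | h <;> rw [h] <;> norm_num
  have hfbound : ∀ x, ‖f x‖ ≤ 1 := by
    intro x
    have h1 : (0:ℝ) ≤ ∏ e ∈ T, indGt (extFun S x) e :=
      Finset.prod_nonneg fun e _ => hGt0 _ e
    have h2 : ∏ e ∈ T, indGt (extFun S x) e ≤ 1 :=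
      Finset.prod_le_one (fun e _ => hGt0 _ e) (fun e _ => hGt1 _ e)
    have h3 : (0:ℝ) ≤ ∏ e ∈ brokenEdgesOn G ord S T, indLe (extFun S x) e :=
      Finset.prod_nonneg fun e _ => hLe0 _ e
    have h4 : ∏ e ∈ brokenEdgesOn G ord S T, indLe (extFun S x) e ≤ 1 :=
      Finset.prod_le_one (fun e _ => hLe0 _ e) (fun e _ => hLe1 _ e)
    simp only [hf]
    rw [Real.norm_eq_abs, abs_of_nonneg (mul_nonneg h1 h3)]
    calc _ ≤ (1:ℝ) * 1 := mul_le_mul h2 h4 h3 zero_le_one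
    _ = 1 := by norm_num
  -- vanishing outside C
  have hvanish : ∀ x, x ∈ B → x ∉ C → f x = 0 := by
    intro x hxB hxC
    rw [hC, Set.mem_pi] at hxC
    push_neg at hxC
    obtain ⟨v, -, hv⟩ := hxC
    have hxv2 : x v ∈ Set.Icc (0:ℝ) (1/2 + δ) := hxB v (Set.mem_univ v)
    have hxvle : x v ≤ 1/2 - δ := by
      by_contra h
      exact hv ⟨not_le.mp h, hxv2.2⟩
    have hvS : (v : V) ∈ verts T := v.2
    simp only [verts, Finset.mem_filter, Finset.mem_univ, true_and] at hvS
    obtain ⟨e, heT, hve⟩ := hvS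
    obtain ⟨u, rfl⟩ := Sym2.mem_iff_exists.mp hve
    have huS : u ∈ S := by
      rw [hS]
      simp only [verts, Finset.mem_filter, Finset.mem_univ, true_and]
      exact ⟨_, heT, Sym2.mem_mk_right _ _⟩
    have hxu : x ⟨u, huS⟩ ≤ 1/2 + δ := (hxB ⟨u, huS⟩ (Set.mem_univ _)).2
    have hfac : indGt (extFun S x) s(↑v, u) = 0 := by
      simp only [indGt, Sym2.lift_mk]
      rw [if_neg]
      rw [extFun, extFun, dif_pos v.2, dif_pos huS]
      push_neg
      have : x ⟨(v : V), v.2⟩ = x v := by congr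
      rw [this]
      linarith
    simp only [hf]
    rw [Finset.prod_eq_zero heT hfac, zero_mul]
  have hmeasC : MeasurableSet C := MeasurableSet.univ_pi fun _ => measurableSet_Ioc
  have hmeasB : MeasurableSet B := MeasurableSet.univ_pi fun _ => measurableSet_Icc
  -- measure of C
  have hvolC : volume C = ENNReal.ofReal (2 * δ) ^ S.card := by
    rw [hC, volume_pi_pi]
    have : volume (Set.Ioc (1/2 - δ) (1/2 + δ)) = ENNReal.ofReal (2 * δ) := by
      rw [Real.volume_Ioc]; congr 1; ring
    rw [Finset.prod_congr rfl fun i _ => this, Finset.prod_const, Finset.card_univ,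
      Fintype.card_coe]
  have hCfin : volume (C ∩ B) < ⊤ := by
    refine lt_of_le_of_lt (measure_mono Set.inter_subset_left) ?_
    rw [hvolC]
    exact ENNReal.pow_lt_top ENNReal.ofReal_lt_top
  -- key integral bound
  have key : |treeIntegral G ord δ S T| ≤ (2 * δ) ^ S.card := by
    have h1 : treeIntegral G ord δ S T = ∫ x in C ∩ B, f x := by
      rw [treeIntegral]
      calc (∫ x in B, f x)
          = ∫ x in B, C.indicator f x := by
            refine MeasureTheory.setIntegral_congr_fun hmeasB fun x hx => ?_
            by_cases hxC : x ∈ C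
            · rw [Set.indicator_of_mem hxC]
            · rw [Set.indicator_of_notMem hxC, hvanish x hx hxC]
        _ = ∫ x in C ∩ B, f x := by
            rw [MeasureTheory.integral_indicator hmeasC,
              MeasureTheory.Measure.restrict_restrict hmeasC]
    rw [h1, ← Real.norm_eq_abs]
    calc ‖∫ x in C ∩ B, f x‖
        ≤ 1 * (volume (C ∩ B)).toReal :=
          MeasureTheory.norm_setIntegral_le_of_norm_le_const_ae hCfin
            (Filter.Eventually.of_forall fun x => hfbound x)
      _ ≤ (2 * δ) ^ S.card := by
          rw [one_mul]
          have h2 : (volume (C ∩ B)).toReal ≤ (volume C).toReal :=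
            ENNReal.toReal_mono (by rw [hvolC]; exact (ENNReal.pow_lt_top ENNReal.ofReal_lt_top).ne)
              (measure_mono Set.inter_subset_left)
          refine h2.trans_eq ?_
          rw [hvolC, ENNReal.toReal_pow, ENNReal.toReal_ofReal (by linarith)]
  -- assemble
  rw [treeWeight, abs_mul, abs_mul]
  have habs1 : |(-1 : ℝ) ^ T.card| = 1 := by
    rw [abs_pow, abs_neg, abs_one, one_pow]
  have habs2 : |(1/2 + δ) ^ (-(S.card : ℤ))| = ((1/2 + δ) ^ S.card)⁻¹ := by
    rw [abs_of_pos (zpow_pos hpos _), zpow_neg, zpow_natCast]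
  rw [habs1, habs2, mul_one]
  have hrhs : (2 * δ / (1/2 + δ)) ^ (verts T).card
      = ((1/2 + δ) ^ S.card)⁻¹ * (2 * δ) ^ S.card := by
    rw [div_pow]; rw [← hS]; ring
  rw [hrhs]
  exact mul_le_mul_of_nonneg_left key (by positivity)

end VolumePaper
end

section
/- Let δ ∈ (0,1/2), let S be a finite set with |S| ≥ 2, and let T be a set of pairs of elements of S forming a tree with vertex set S. Then ∫_{[0,1/2+δ]^S} ∏_{uv∈T} 1[x_u+x_v>1] dx ≤ (2δ)^{|S|}; indeed, the set {x ∈ [0,1/2+δ]^S : x_u+x_v > 1 for all uv ∈ T} is contained in the box [1/2−δ, 1/2+δ]^S. -/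
open MeasureTheory

attribute [local instance] Classical.propDecidable

namespace VolumePaper

variable {V : Type} [Fintype V]

/-- For `δ ∈ (0,1/2)`, a finite vertex set of size at least 2 and a
set `T` of pairs forming a spanning tree, the region of the box `[0,1/2+δ]^S` where
`x_u + x_v > 1` for all `uv ∈ T` is contained in `[1/2−δ,1/2+δ]^S`, and
`∫_{[0,1/2+δ]^S} ∏_{uv∈T} 1[x_u+x_v>1] dx ≤ (2δ)^{|S|}`. -/
theorem statement10 (V : Type) [Fintype V] (hV : 2 ≤ Fintype.card V) (δ : ℝ)
    (hδ : δ ∈ Set.Ioo (0:ℝ) (1/2)) (T : Finset (Sym2 V)) (hT : IsTreeSet T)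
    (hspan : verts T = Finset.univ) :
    ({x : V → ℝ | (∀ v, x v ∈ Set.Icc (0:ℝ) (1/2 + δ)) ∧ ∀ e ∈ T, indGt x e = 1} ⊆
      {x : V → ℝ | ∀ v, x v ∈ Set.Icc (1/2 - δ) (1/2 + δ)}) ∧
    (∫ x : V → ℝ in Set.univ.pi (fun _ => Set.Icc (0:ℝ) (1/2 + δ)),
        ∏ e ∈ T, indGt x e) ≤ (2 * δ) ^ Fintype.card V := by
  obtain ⟨hδ0, hδhalf⟩ := hδ
  have hsub : ∀ x : V → ℝ, (∀ v, x v ∈ Set.Icc (0:ℝ) (1/2 + δ)) →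
      (∀ e ∈ T, indGt x e = 1) → ∀ v, x v ∈ Set.Icc (1/2 - δ) (1/2 + δ) := by
    intro x hb he v
    refine ⟨?_, (hb v).2⟩
    have hv : v ∈ verts T := hspan ▸ Finset.mem_univ v
    rw [verts, Finset.mem_filter] at hv
    obtain ⟨-, e, heT, hve⟩ := hv
    obtain ⟨u, rfl⟩ := Sym2.mem_iff_exists.mp hve
    have h1 := he _ heT
    rw [indGt, Sym2.lift_mk] at h1
    by_cases h : 1 < x v + x u
    · have hu := (hb u).2
      linarith
    · simp [h] at h1
  have h01 : ∀ (x : V → ℝ) e, indGt x e = 0 ∨ indGt x e = 1 := by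
    intro x e
    induction e using Sym2.ind with
    | _ u v =>
      rw [indGt, Sym2.lift_mk]
      dsimp only
      split <;> simp
  have hnn : ∀ (x : V → ℝ) e, 0 ≤ indGt x e := by
    intro x e
    rcases h01 x e with h | h <;> rw [h] <;> norm_num
  constructor
  · intro x hx v
    exact hsub x hx.1 hx.2 v
  · set B := Set.univ.pi fun _ : V => Set.Icc (0:ℝ) (1/2 + δ) with hB
    set C := Set.univ.pi fun _ : V => Set.Icc (1/2 - δ : ℝ) (1/2 + δ) with hC
    have hmB : MeasurableSet B := MeasurableSet.univ_pi fun _ => measurableSet_Icc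
    have hmC : MeasurableSet C := MeasurableSet.univ_pi fun _ => measurableSet_Icc
    have hCB : C ⊆ B := Set.pi_mono fun _ _ => Set.Icc_subset_Icc (by linarith) le_rfl
    have hmeas : Measurable fun x : V → ℝ => ∏ e ∈ T, indGt x e := by
      apply Finset.measurable_prod
      intro e _
      induction e using Sym2.ind with
      | _ u v =>
        simp only [indGt, Sym2.lift_mk]
        exact Measurable.ite
          (measurableSet_lt measurable_const
            ((measurable_pi_apply u).add (measurable_pi_apply v)))
          measurable_const measurable_const
    have hfinB : volume B < ⊤ := by
      rw [hB, volume_pi_pi]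
      refine ENNReal.prod_lt_top fun _ _ => ?_
      simp [Real.volume_Icc]
    haveI : IsFiniteMeasure (volume.restrict B) :=
      ⟨by rwa [Measure.restrict_apply_univ]⟩
    have hfint : IntegrableOn (fun x : V → ℝ => ∏ e ∈ T, indGt x e) B := by
      refine Integrable.mono' (integrable_const (1:ℝ)) hmeas.aestronglyMeasurable ?_
      filter_upwards with x
      rw [Real.norm_eq_abs, abs_of_nonneg (Finset.prod_nonneg fun e _ => hnn x e)]
      refine Finset.prod_le_one (fun e _ => hnn x e) (fun e _ => ?_)
      rcases h01 x e with h | h <;> rw [h] <;> norm_num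
    have hgint : IntegrableOn (C.indicator fun _ => (1:ℝ)) B :=
      (integrable_const (1:ℝ)).indicator hmC
    have hfle : ∀ x ∈ B, (∏ e ∈ T, indGt x e) ≤ C.indicator (fun _ => (1:ℝ)) x := by
      intro x hx
      by_cases hall : ∀ e ∈ T, indGt x e = 1
      · have hxC : x ∈ C := by
          rw [hC, Set.mem_univ_pi]
          exact hsub x (fun v => (Set.mem_univ_pi.mp hx) v) hall
        rw [Set.indicator_of_mem hxC]
        calc ∏ e ∈ T, indGt x e = ∏ _e ∈ T, (1:ℝ) := Finset.prod_congr rfl hall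
          _ = 1 := Finset.prod_const_one
          _ ≤ 1 := le_rfl
      · push_neg at hall
        obtain ⟨e, heT, hne⟩ := hall
        have he0 : indGt x e = 0 := (h01 x e).resolve_right hne
        rw [Finset.prod_eq_zero heT he0]
        exact Set.indicator_nonneg (fun _ _ => zero_le_one) x
    have hvolC : (volume C).toReal = (2 * δ) ^ Fintype.card V := by
      rw [hC, volume_pi_pi]
      simp only [Real.volume_Icc]
      have : (1/2 + δ) - (1/2 - δ) = 2 * δ := by ring
      rw [this, Finset.prod_const, Finset.card_univ, ENNReal.toReal_pow,
        ENNReal.toReal_ofReal (by linarith)]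
    calc ∫ x in B, ∏ e ∈ T, indGt x e
        ≤ ∫ x in B, C.indicator (fun _ => (1:ℝ)) x :=
          setIntegral_mono_on hfint hgint hmB hfle
      _ = ∫ _x in B ∩ C, (1:ℝ) := setIntegral_indicator hmC
      _ = (volume (B ∩ C)).toReal := by rw [setIntegral_const, smul_eq_mul, mul_one]; rfl
      _ = (volume C).toReal := by rw [Set.inter_eq_self_of_subset_right hCB]
      _ = (2 * δ) ^ Fintype.card V := hvolC

end VolumePaper
end
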